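/- arXiv:2008.12323 — 4 statements merged into one kernel-verified Lean document; each statement's English description precedes it below -/
import Mathlib

section
/- For a positive semidefinite Hermitian Toeplitz matrix T of size n×n with rank r < n, there exist r distinct frequencies f_1,...,f_r in [0,1) and positive reals p_1,...,p_r such that T equals the sum over k of p_k · v(f_k) v(f_k)*, where v(f) is the vector with entries e^{2πi j f} for j = 0,...,n-1 (the Carathéodory–Fejér / Vandermonde decomposition). -/
open Complex
open scoped ComplexOrder

/-- The Vandermonde (steering) vector `v(f) ∈ ℂ^n`, `v(f)_j = e^{2πi j f}`. -/
noncomputable def vand (n : ℕ) (f : ℝ) : Fin n → ℂ :=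
  fun j => Complex.exp (2 * Real.pi * Complex.I * (j.val : ℂ) * (f : ℂ))

namespace CFaux
open Polynomial Matrix

variable {n : ℕ}

/-- coefficient vector of a polynomial, truncated to `Fin n`. -/
noncomputable def vecp (n : ℕ) (u : ℂ[X]) : Fin n → ℂ := fun j => u.coeff j

/-- the sesquilinear form associated to `T` on polynomials. -/
noncomputable def BB (T : Matrix (Fin n) (Fin n) ℂ) (u v : ℂ[X]) : ℂ :=
  star (vecp n v) ⬝ᵥ T.mulVec (vecp n u)

/-- all coefficients of index `≥ m` vanish. -/
def Small (m : ℕ) (u : ℂ[X]) : Prop := ∀ j, m ≤ j → u.coeff j = 0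

lemma small_of_natDegree_lt {m : ℕ} {u : ℂ[X]} (h : u.natDegree < m) : Small m u :=
  fun _ hj => u.coeff_eq_zero_of_natDegree_lt (lt_of_lt_of_le h hj)

lemma small_mono {m m' : ℕ} {u : ℂ[X]} (h : Small m u) (hm : m ≤ m') : Small m' u :=
  fun j hj => h j (le_trans hm hj)

lemma small_zero_eq {u : ℂ[X]} (h : Small 0 u) : u = 0 := by
  ext j; exact h j (Nat.zero_le _)

lemma natDegree_lt_of_small {m : ℕ} {u : ℂ[X]} (h : Small m u) (hu : u ≠ 0) (hm : 0 < m) :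
    u.natDegree < m := by
  by_contra hc
  exact (Polynomial.leadingCoeff_ne_zero.mpr hu) (h u.natDegree (le_of_not_gt hc))

lemma vecp_add (u v : ℂ[X]) : vecp n (u + v) = vecp n u + vecp n v := by
  funext j; simp [vecp]

lemma vecp_sub (u v : ℂ[X]) : vecp n (u - v) = vecp n u - vecp n v := by
  funext j; simp [vecp]

lemma vecp_smul (c : ℂ) (u : ℂ[X]) : vecp n (C c * u) = c • vecp n u := by
  funext j; simp [vecp]

lemma vecp_zero : vecp n (0 : ℂ[X]) = 0 := by funext j; simp [vecp]

lemma vecp_sum {ι : Type*} (s : Finset ι) (g : ι → ℂ[X]) :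
    vecp n (∑ i ∈ s, g i) = ∑ i ∈ s, vecp n (g i) := by
  funext j; simp [vecp, Polynomial.finset_sum_coeff]

lemma eq_zero_of_vecp_eq_zero {u : ℂ[X]} (hs : Small n u) (h : vecp n u = 0) : u = 0 := by
  ext j
  rcases lt_or_ge j n with hj | hj
  · have := congrFun h ⟨j, hj⟩
    simpa [vecp] using this
  · simpa using hs j hj

lemma small_eq_sum {m : ℕ} {g : ℂ[X]} (hg : Small m g) :
    g = ∑ s : Fin m, C (g.coeff s) * X ^ (s : ℕ) := by
  ext j
  rw [Polynomial.finset_sum_coeff]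
  rcases lt_or_ge j m with hj | hj
  · rw [Finset.sum_eq_single (⟨j, hj⟩ : Fin m)]
    · simp [Polynomial.coeff_C_mul, Polynomial.coeff_X_pow]
    · intro b _ hb
      have : (b : ℕ) ≠ j := fun hc => hb (by ext; simp [hc])
      simp [Polynomial.coeff_C_mul, Polynomial.coeff_X_pow, (Ne.symm this)]
    · simp
  · rw [hg j hj, Finset.sum_eq_zero]
    intro b _
    have : (b : ℕ) ≠ j := by omega
    simp [Polynomial.coeff_C_mul, Polynomial.coeff_X_pow, (Ne.symm this)]

lemma ofV_coeff {m : ℕ} (x : Fin m → ℂ) (j : ℕ) :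
    (∑ s : Fin m, C (x s) * X ^ (s : ℕ)).coeff j = if h : j < m then x ⟨j, h⟩ else 0 := by
  rw [Polynomial.finset_sum_coeff]
  split
  · next h =>
    rw [Finset.sum_eq_single (⟨j, h⟩ : Fin m)]
    · simp [Polynomial.coeff_C_mul, Polynomial.coeff_X_pow]
    · intro b _ hb
      have hne : (b : ℕ) ≠ j := fun hc => hb (by ext; simp [hc])
      simp [Polynomial.coeff_C_mul, Polynomial.coeff_X_pow, (Ne.symm hne)]
    · simp
  · next h =>
    apply Finset.sum_eq_zero
    intro b _
    have hne : (b : ℕ) ≠ j := by omega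
    simp [Polynomial.coeff_C_mul, Polynomial.coeff_X_pow, (Ne.symm hne)]

lemma vecp_ofV {m : ℕ} (x : Fin m → ℂ) :
    vecp m (∑ s : Fin m, C (x s) * X ^ (s : ℕ)) = x := by
  funext j
  rw [vecp, ofV_coeff]
  simp

lemma small_ofV {m : ℕ} (x : Fin m → ℂ) :
    Small m (∑ s : Fin m, C (x s) * X ^ (s : ℕ)) := by
  intro j hj
  rw [ofV_coeff]
  simp [Nat.not_lt.mpr hj]

section BBlemmas

variable (T : Matrix (Fin n) (Fin n) ℂ)

lemma BB_add_left (u u' v : ℂ[X]) : BB T (u + u') v = BB T u v + BB T u' v := by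
  simp [BB, vecp_add, Matrix.mulVec_add, dotProduct_add]

lemma BB_sub_left (u u' v : ℂ[X]) : BB T (u - u') v = BB T u v - BB T u' v := by
  simp [BB, vecp_sub, Matrix.mulVec_sub, dotProduct_sub]

lemma BB_smul_left (c : ℂ) (u v : ℂ[X]) : BB T (C c * u) v = c * BB T u v := by
  simp [BB, vecp_smul, Matrix.mulVec_smul, dotProduct_smul, smul_eq_mul]

lemma BB_add_right (u v v' : ℂ[X]) : BB T u (v + v') = BB T u v + BB T u v' := by
  simp [BB, vecp_add, add_dotProduct, star_add]

lemma BB_sub_right (u v v' : ℂ[X]) : BB T u (v - v') = BB T u v - BB T u v' := by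
  simp [BB, vecp_sub, sub_dotProduct, star_sub]

lemma BB_smul_right (c : ℂ) (u v : ℂ[X]) :
    BB T u (C c * v) = (starRingEnd ℂ) c * BB T u v := by
  simp [BB, vecp_smul, star_smul, smul_dotProduct, smul_eq_mul]

lemma BB_zero_left (v : ℂ[X]) : BB T 0 v = 0 := by
  simp [BB, vecp_zero]

lemma BB_herm (hherm : T.IsHermitian) (u v : ℂ[X]) :
    BB T u v = (starRingEnd ℂ) (BB T v u) := by
  have h : (starRingEnd ℂ) (BB T v u) = star (BB T v u) := rfl
  rw [h, BB, BB, star_dotProduct]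
  congr 1
  rw [star_mulVec, hherm.eq, ← Matrix.dotProduct_mulVec]

lemma BB_expand (u v : ℂ[X]) :
    BB T u v = ∑ j : Fin n, ∑ k : Fin n,
      (starRingEnd ℂ) (v.coeff j) * T j k * u.coeff k := by
  unfold BB vecp dotProduct Matrix.mulVec
  simp only [Pi.star_apply, dotProduct, Finset.mul_sum]
  congr 1; funext j; congr 1; funext k; simp [Complex.star_def]; ring

lemma BB_sum_left {ι : Type*} (s : Finset ι) (g : ι → ℂ[X]) (v : ℂ[X]) :
    BB T (∑ i ∈ s, g i) v = ∑ i ∈ s, BB T (g i) v := by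
  induction s using Finset.cons_induction with
  | empty => simp [BB_zero_left]
  | cons a s ha ih => rw [Finset.sum_cons, Finset.sum_cons, BB_add_left, ih]

lemma BB_zero_right (u : ℂ[X]) : BB T u 0 = 0 := by
  simp [BB, vecp_zero]

lemma BB_sum_right {ι : Type*} (s : Finset ι) (g : ι → ℂ[X]) (u : ℂ[X]) :
    BB T u (∑ i ∈ s, g i) = ∑ i ∈ s, BB T u (g i) := by
  induction s using Finset.cons_induction with
  | empty => simp [BB_zero_right]
  | cons a s ha ih => rw [Finset.sum_cons, Finset.sum_cons, BB_add_right, ih]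

lemma BB_kernel_left (u v : ℂ[X]) (h : T.mulVec (vecp n u) = 0) : BB T u v = 0 := by
  simp [BB, h]

lemma BB_kernel_right (hherm : T.IsHermitian) (u v : ℂ[X])
    (h : T.mulVec (vecp n v) = 0) : BB T u v = 0 := by
  rw [BB_herm T hherm, BB_kernel_left T v u h, map_zero]

end BBlemmas

lemma BB_shift {N : ℕ} (T : Matrix (Fin (N+1)) (Fin (N+1)) ℂ)
    (htoep : ∀ j k j' k' : Fin (N+1),
      ((j.val : ℤ) - (k.val : ℤ) = (j'.val : ℤ) - (k'.val : ℤ)) → T j k = T j' k')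
    {u v : ℂ[X]} (hu : Small N u) (hv : Small N v) :
    BB T (X*u) (X*v) = BB T u v := by
  have L : BB T (X*u) (X*v)
      = ∑ j : Fin N, ∑ k : Fin N,
          (starRingEnd ℂ) (v.coeff j) * T j.succ k.succ * u.coeff k := by
    rw [BB_expand, Fin.sum_univ_succ]
    simp only [Fin.val_zero, Fin.val_succ, Polynomial.coeff_X_mul,
      Polynomial.mul_coeff_zero, Polynomial.coeff_X_zero, zero_mul, map_zero,
      mul_zero, Finset.sum_const_zero, zero_add]
    refine Finset.sum_congr rfl fun j _ => ?_
    rw [Fin.sum_univ_succ]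
    simp
  have R : BB T u v
      = ∑ j : Fin N, ∑ k : Fin N,
          (starRingEnd ℂ) (v.coeff j) * T j.castSucc k.castSucc * u.coeff k := by
    rw [BB_expand, Fin.sum_univ_castSucc]
    simp only [Fin.val_last, hv N le_rfl, Fin.coe_castSucc, map_zero, zero_mul,
      Finset.sum_const_zero, add_zero]
    refine Finset.sum_congr rfl fun j _ => ?_
    rw [Fin.sum_univ_castSucc]
    simp [Fin.val_last, hu N le_rfl]
  rw [L, R]
  refine Finset.sum_congr rfl fun j _ => Finset.sum_congr rfl fun k _ => ?_
  congr 2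
  exact htoep _ _ _ _ (by simp only [Fin.val_succ, Fin.coe_castSucc]; push_cast; ring)

lemma rank_add_ker (T : Matrix (Fin n) (Fin n) ℂ) :
    T.rank + Module.finrank ℂ (LinearMap.ker T.mulVecLin) = n := by
  have h := LinearMap.finrank_range_add_finrank_ker T.mulVecLin
  rw [Module.finrank_fintype_fun_eq_card] at h
  simpa [Matrix.rank] using h

lemma kernel_exists (T : Matrix (Fin n) (Fin n) ℂ) (h : T.rank < n) :
    ∃ x : Fin n → ℂ, x ≠ 0 ∧ T.mulVec x = 0 := by
  have h2 := rank_add_ker T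
  have hb : LinearMap.ker T.mulVecLin ≠ ⊥ := by
    intro hb
    rw [hb] at h2
    simp at h2
    omega
  obtain ⟨x, hx, hx0⟩ := Submodule.exists_mem_ne_zero_of_ne_bot hb
  exact ⟨x, hx0, by simpa [Matrix.mulVecLin_apply] using hx⟩

lemma finrank_ker_ge (T : Matrix (Fin n) (Fin n) ℂ) {m : ℕ} (v : Fin m → (Fin n → ℂ))
    (hv : LinearIndependent ℂ v) (hker : ∀ s, T.mulVec (v s) = 0) :
    m ≤ Module.finrank ℂ (LinearMap.ker T.mulVecLin) := by
  have hv' : LinearIndependent ℂ (fun s => (⟨v s, by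
      simpa [Matrix.mulVecLin_apply] using hker s⟩ : LinearMap.ker T.mulVecLin)) := by
    apply LinearIndependent.of_comp (LinearMap.ker T.mulVecLin).subtype
    exact hv
  simpa using hv'.fintype_card_le_finrank

lemma finrank_ker_le (T : Matrix (Fin n) (Fin n) ℂ) {m : ℕ} (v : Fin m → (Fin n → ℂ))
    (hspan : ∀ x, T.mulVec x = 0 → x ∈ Submodule.span ℂ (Set.range v)) :
    Module.finrank ℂ (LinearMap.ker T.mulVecLin) ≤ m := by
  have h1 : LinearMap.ker T.mulVecLin ≤ Submodule.span ℂ (Set.range v) := by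
    intro x hx
    exact hspan x (by simpa [Matrix.mulVecLin_apply] using hx)
  calc Module.finrank ℂ (LinearMap.ker T.mulVecLin)
      ≤ Module.finrank ℂ (Submodule.span ℂ (Set.range v)) := Submodule.finrank_mono h1
    _ ≤ m := by simpa [Set.finrank] using finrank_range_le_card v

lemma vecp_mul_expand {m : ℕ} (p g : ℂ[X]) (hg : Small m g) :
    vecp n (g * p) = ∑ s : Fin m, g.coeff (s : ℕ) • vecp n (X ^ (s : ℕ) * p) := by
  have h1 : g * p = ∑ s : Fin m, C (g.coeff s) * (X ^ (s : ℕ) * p) := by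
    conv_lhs => rw [small_eq_sum hg]
    rw [Finset.sum_mul]
    exact Finset.sum_congr rfl fun s _ => by ring
  rw [h1, vecp_sum]
  exact Finset.sum_congr rfl fun s _ => by rw [← vecp_smul]

end CFaux

/-- Carathéodory–Fejér / Vandermonde decomposition of a PSD Hermitian Toeplitz matrix of
rank `r < n`. -/
theorem caratheodory_fejer_vandermonde (n r : ℕ)
    (T : Matrix (Fin n) (Fin n) ℂ)
    (hpsd : T.PosSemidef)
    (htoep : ∀ j k j' k' : Fin n,
      ((j.val : ℤ) - (k.val : ℤ) = (j'.val : ℤ) - (k'.val : ℤ)) → T j k = T j' k')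
    (hrank : T.rank = r) (hrn : r < n) :
    ∃ (f : Fin r → ℝ) (p : Fin r → ℝ),
      Function.Injective f ∧
      (∀ k, f k ∈ Set.Ico (0 : ℝ) 1) ∧
      (∀ k, 0 < p k) ∧
      (∀ i j : Fin n,
        T i j = ∑ k, (p k : ℂ) * vand n (f k) i * (starRingEnd ℂ) (vand n (f k) j)) := by
  classical
  open CFaux Polynomial Matrix in
  rcases Nat.eq_zero_or_pos r with hr0 | hrpos
  · -- rank zero : T = 0
    subst hr0
    have hT0 : T = 0 := by
      have h2 := CFaux.rank_add_ker T
      rw [hrank] at h2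
      have hker : LinearMap.ker T.mulVecLin = ⊤ := by
        apply Submodule.eq_top_of_finrank_eq
        rw [Module.finrank_fintype_fun_eq_card]
        simpa using h2
      ext i j
      have hx : T.mulVec (Pi.single j 1) = 0 := by
        have hmem : (Pi.single j 1 : Fin n → ℂ) ∈ LinearMap.ker T.mulVecLin := by
          rw [hker]; trivial
        simpa [Matrix.mulVecLin_apply] using hmem
      have := congrFun hx i
      simpa [Matrix.mulVec_single] using this
    exact ⟨Fin.elim0, Fin.elim0, fun k => k.elim0, fun k => k.elim0, fun k => k.elim0,
      by intro i j; simp [hT0]⟩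
  obtain ⟨N, rfl⟩ : ∃ N, n = N + 1 := ⟨n - 1, by omega⟩
  have hherm : T.IsHermitian := hpsd.1
  have hrN : r ≤ N := by omega
  -- kernel predicate
  set K : ℂ[X] → Prop := fun u => T.mulVec (vecp (N+1) u) = 0 with hK
  have hKzero : ∀ u : ℂ[X], BB T u u = 0 → K u := by
    intro u h
    exact (hpsd.dotProduct_mulVec_zero_iff (vecp (N+1) u)).mp h
  have hKBB : ∀ u : ℂ[X], K u → ∀ v, BB T u v = 0 := fun u hu v => BB_kernel_left T u v hu
  have hKBB' : ∀ u : ℂ[X], K u → ∀ v, BB T v u = 0 := fun u hu v =>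
    BB_kernel_right T hherm v u hu
  -- minimal degree kernel polynomial
  have hPN : ∃ u : ℂ[X], u ≠ 0 ∧ Small (N+1) u ∧ K u := by
    obtain ⟨x, hxne, hxker⟩ := kernel_exists T (by omega)
    refine ⟨∑ j : Fin (N+1), C (x j) * X ^ (j : ℕ), ?_, ?_, ?_⟩
    · intro h
      apply hxne
      have := congrArg (vecp (N+1)) h
      rw [vecp_ofV] at this
      simpa [vecp_zero] using this
    · exact small_ofV x
    · show T.mulVec (vecp (N+1) _) = 0
      rw [vecp_ofV]
      exact hxker
  have hPex : ∃ m : ℕ, ∃ u : ℂ[X], u ≠ 0 ∧ Small (m+1) u ∧ K u := ⟨N, hPN⟩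
  set d := Nat.find hPex with hd
  obtain ⟨p₀, hp₀ne, hp₀small, hp₀K⟩ := Nat.find_spec hPex
  have hdleN : d ≤ N := Nat.find_le hPN
  have hmin : ∀ u : ℂ[X], Small d u → K u → u = 0 := by
    intro u hsmall hKu
    by_contra hne
    rcases Nat.eq_zero_or_pos d with h0 | h1
    · exact hne (small_zero_eq (h0 ▸ hsmall))
    · exact Nat.find_min hPex (show d - 1 < d by omega)
        ⟨u, hne, by simpa [Nat.sub_add_cancel h1] using hsmall, hKu⟩
  have hpd0 : p₀.coeff d ≠ 0 := by
    intro h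
    apply hp₀ne
    apply hmin p₀ _ hp₀K
    intro j hj
    rcases Nat.eq_or_lt_of_le hj with h' | h'
    · rw [← h']; exact h
    · exact hp₀small j (by omega)
  -- monic normalization
  set p : ℂ[X] := C (p₀.coeff d)⁻¹ * p₀ with hpdef
  have hpK : K p := by
    show T.mulVec (vecp (N+1) (C (p₀.coeff d)⁻¹ * p₀)) = 0
    rw [vecp_smul, Matrix.mulVec_smul]
    have : T.mulVec (vecp (N+1) p₀) = 0 := hp₀K
    rw [this, smul_zero]
  have hpsmall : Small (d+1) p := by
    intro j hj
    rw [hpdef, Polynomial.coeff_C_mul, hp₀small j hj, mul_zero]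
  have hpcoeffd : p.coeff d = 1 := by
    rw [hpdef, Polynomial.coeff_C_mul, inv_mul_cancel₀ hpd0]
  have hpne : p ≠ 0 := fun h => by simp [h] at hpcoeffd
  have hpdeg : p.natDegree = d := by
    have h1 : p.natDegree < d + 1 := natDegree_lt_of_small hpsmall hpne (by omega)
    have h2 : d ≤ p.natDegree := Polynomial.le_natDegree_of_ne_zero (by rw [hpcoeffd]; exact one_ne_zero)
    omega
  have hpmonic : p.Monic := by
    show p.leadingCoeff = 1
    rw [Polynomial.leadingCoeff, hpdeg, hpcoeffd]
  have hKsub : ∀ u v : ℂ[X], K u → K v → K (u - v) := by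
    intro u v hu hv
    show T.mulVec (vecp (N+1) (u - v)) = 0
    rw [vecp_sub, Matrix.mulVec_sub]
    have h1 : T.mulVec (vecp (N+1) u) = 0 := hu
    have h2 : T.mulVec (vecp (N+1) v) = 0 := hv
    rw [h1, h2, sub_zero]
  -- shifted kernel polynomials
  have hshiftK : ∀ s : ℕ, s + d ≤ N → K (X ^ s * p) := by
    intro s
    induction s with
    | zero => intro _; rw [pow_zero, one_mul]; exact hpK
    | succ s ih =>
      intro hs
      have hdegsp : (X ^ s * p).natDegree = s + d := by
        rw [Polynomial.natDegree_mul (pow_ne_zero s Polynomial.X_ne_zero) hpne,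
          Polynomial.natDegree_X_pow, hpdeg]
      have hsmallsp : Small N (X ^ s * p) := small_of_natDegree_lt (by omega)
      have hBprev : BB T (X ^ s * p) (X ^ s * p) = 0 := hKBB _ (ih (by omega)) _
      have h1 : K (X * (X ^ s * p)) := by
        apply hKzero
        rw [BB_shift T htoep hsmallsp hsmallsp]
        exact hBprev
      have h2 : X ^ (s+1) * p = X * (X ^ s * p) := by ring
      rw [h2]; exact h1
  have hmulK : ∀ g : ℂ[X], Small (N+1-d) g → K (g * p) := by
    intro g hg
    show T.mulVec (vecp (N+1) (g * p)) = 0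
    rw [vecp_mul_expand p g hg]
    have hl : ∀ x, T.mulVec x = T.mulVecLin x := fun x => rfl
    rw [hl, map_sum]
    refine Finset.sum_eq_zero fun s _ => ?_
    rw [_root_.map_smul, ← hl]
    have : T.mulVec (vecp (N+1) (X ^ (s:ℕ) * p)) = 0 := hshiftK s (by
      have := s.isLt; omega)
    rw [this, smul_zero]
  -- rank identification : d = r
  have hsmallmod : ∀ u : ℂ[X], Small d (u %ₘ p) := by
    intro u
    intro j hj
    apply Polynomial.coeff_eq_zero_of_degree_lt
    have h1 : (u %ₘ p).degree < p.degree := Polynomial.degree_modByMonic_lt u hpmonic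
    have h2 : p.degree = (d : WithBot ℕ) := by
      rw [Polynomial.degree_eq_natDegree hpne, hpdeg]
    rw [h2] at h1
    exact lt_of_lt_of_le h1 (by exact_mod_cast hj)
  have hdr : d = r := by
    have hub : T.rank ≤ d := by
      have hker_ge : N+1-d ≤ Module.finrank ℂ (LinearMap.ker T.mulVecLin) := by
        apply finrank_ker_ge T (fun s : Fin (N+1-d) => vecp (N+1) (X ^ (s:ℕ) * p))
        · rw [Fintype.linearIndependent_iff]
          intro c hc s
          set g : ℂ[X] := ∑ s : Fin (N+1-d), C (c s) * X ^ (s : ℕ) with hg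
          have hgsmall : Small (N+1-d) g := small_ofV c
          have hvec : vecp (N+1) (g * p) = 0 := by
            rw [vecp_mul_expand p g hgsmall]
            rw [← hc]
            refine Finset.sum_congr rfl fun b _ => ?_
            congr 1
            rw [hg, ofV_coeff]
            simp [b.isLt]
          have hsmallgp : Small (N+1) (g * p) := by
            rcases eq_or_ne g 0 with h0 | h0
            · intro j hj; simp [h0]
            · apply small_of_natDegree_lt
              rw [Polynomial.natDegree_mul h0 hpne, hpdeg]
              have := natDegree_lt_of_small hgsmall h0 (by omega)
              omega
          have hgp0 : g * p = 0 := eq_zero_of_vecp_eq_zero hsmallgp hvec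
          have hg0 : g = 0 := by
            rcases mul_eq_zero.mp hgp0 with h | h
            · exact h
            · exact absurd h hpne
          have hcs : g.coeff (s : ℕ) = c s := by
            rw [hg, ofV_coeff]
            simp [s.isLt]
          rw [← hcs, hg0, Polynomial.coeff_zero]
        · intro s
          exact hshiftK (s : ℕ) (by have := s.isLt; omega)
      have := rank_add_ker T
      omega
    have hlb : d ≤ T.rank := by
      have hker_le : Module.finrank ℂ (LinearMap.ker T.mulVecLin) ≤ N+1-d := by
        apply finrank_ker_le T (fun s : Fin (N+1-d) => vecp (N+1) (X ^ (s:ℕ) * p))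
        intro x hx
        set u : ℂ[X] := ∑ j : Fin (N+1), C (x j) * X ^ (j : ℕ) with hu
        have hvecu : vecp (N+1) u = x := vecp_ofV x
        have hKu : K u := by
          show T.mulVec (vecp (N+1) u) = 0
          rw [hvecu]; exact hx
        have husmall : Small (N+1) u := small_ofV x
        have hqsmall : Small (N+1-d) (u /ₘ p) := by
          rcases eq_or_ne u 0 with h0 | h0
          · intro j hj; simp [h0]
          · apply small_of_natDegree_lt
            rw [Polynomial.natDegree_divByMonic u hpmonic, hpdeg]
            have := natDegree_lt_of_small husmall h0 (by omega)
            omega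
        have hKqp : K ((u /ₘ p) * p) := hmulK _ hqsmall
        have hKrem : K (u %ₘ p) := by
          have h1 : u %ₘ p = u - (u /ₘ p) * p := by
            have := Polynomial.modByMonic_add_div u p
            linear_combination this
          rw [h1]
          exact hKsub _ _ hKu hKqp
        have hrem0 : u %ₘ p = 0 := hmin _ (hsmallmod u) hKrem
        have hufac : u = (u /ₘ p) * p := by
          have := Polynomial.modByMonic_add_div u p
          rw [hrem0, zero_add] at this
          linear_combination -this
        rw [← hvecu, hufac, vecp_mul_expand p _ hqsmall]
        apply Submodule.sum_mem
        intro b _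
        exact Submodule.smul_mem _ _ (Submodule.subset_span ⟨b, rfl⟩)
      have := rank_add_ker T
      omega
    omega
  rw [hdr] at hmin hpsmall hpcoeffd hpdeg hshiftK hmulK hsmallmod
  -- kernel uniqueness at degree ≤ r
  have huniq : ∀ u : ℂ[X], Small (r+1) u → K u → u = C (u.coeff r) * p := by
    intro u hsm hKu
    have h1 : Small r (u - C (u.coeff r) * p) := by
      intro j hj
      rcases Nat.eq_or_lt_of_le hj with h | h
      · rw [Polynomial.coeff_sub, Polynomial.coeff_C_mul, ← h, hpcoeffd, mul_one, sub_self]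
      · rw [Polynomial.coeff_sub, Polynomial.coeff_C_mul, hsm j (by omega),
          hpsmall j (by omega), mul_zero, sub_self]
    have h2 : K (u - C (u.coeff r) * p) := by
      apply hKsub _ _ hKu
      show T.mulVec (vecp (N+1) (C (u.coeff r) * p)) = 0
      rw [vecp_smul, Matrix.mulVec_smul]
      have : T.mulVec (vecp (N+1) p) = 0 := hpK
      rw [this, smul_zero]
    have h3 := hmin _ h1 h2
    have := sub_eq_zero.mp h3
    exact this
  -- roots lie on the unit circle
  have hcirc : ∀ w : ℂ, p.IsRoot w → (starRingEnd ℂ) w * w = 1 := by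
    intro w hw
    have hfac : (X - C w) * (p /ₘ (X - C w)) = p :=
      (Polynomial.mul_divByMonic_eq_iff_isRoot).mpr hw
    set s : ℂ[X] := p /ₘ (X - C w) with hsdef
    have hsne : s ≠ 0 := by
      intro h
      rw [h, mul_zero] at hfac
      exact hpne hfac.symm
    have hsdeg : s.natDegree = r - 1 := by
      have h := congrArg Polynomial.natDegree hfac
      rw [Polynomial.natDegree_mul (Polynomial.X_sub_C_ne_zero w) hsne,
        Polynomial.natDegree_X_sub_C, hpdeg] at h
      omega
    have hssmallN : Small N s := small_of_natDegree_lt (by omega)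
    have hshift : BB T (X*s) (X*s) = BB T s s := BB_shift T htoep hssmallN hssmallN
    have hBpp : BB T p p = 0 := hKBB _ hpK _
    have hBpp' : BB T (X*s - C w * s) (X*s - C w * s) = 0 := by
      have hp2 : X*s - C w * s = p := by rw [← hfac]; ring
      rw [hp2]; exact hBpp
    rw [BB_sub_left, BB_sub_right, BB_sub_right, BB_smul_left, BB_smul_left,
      BB_smul_right, BB_smul_right] at hBpp'
    have hexp : BB T (s - C ((starRingEnd ℂ) w) * (X*s)) (s - C ((starRingEnd ℂ) w) * (X*s)) = 0 := by
      rw [BB_sub_left, BB_sub_right, BB_sub_right, BB_smul_left, BB_smul_left,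
        BB_smul_right, BB_smul_right]
      simp only [Complex.conj_conj]
      linear_combination hBpp' + ((starRingEnd ℂ) w * w - 1) * hshift
    have hKu : K (s - C ((starRingEnd ℂ) w) * (X*s)) := hKzero _ hexp
    have husmall : Small (r+1) (s - C ((starRingEnd ℂ) w) * (X*s)) := by
      apply small_of_natDegree_lt
      have h1 : (X*s).natDegree = r := by
        rw [Polynomial.natDegree_mul Polynomial.X_ne_zero hsne, Polynomial.natDegree_X]
        omega
      calc (s - C ((starRingEnd ℂ) w) * (X*s)).natDegree
          ≤ max s.natDegree (C ((starRingEnd ℂ) w) * (X*s)).natDegree :=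
            Polynomial.natDegree_sub_le _ _
        _ ≤ r := by
            apply max_le (by omega)
            exact le_trans (Polynomial.natDegree_C_mul_le _ _) (le_of_eq h1)
        _ < r + 1 := by omega
    have huu := huniq _ husmall hKu
    set c : ℂ := (s - C ((starRingEnd ℂ) w) * (X*s)).coeff r with hcdef
    have h5 : (1 - C ((starRingEnd ℂ) w) * X) * s = (C c * (X - C w)) * s := by
      calc (1 - C ((starRingEnd ℂ) w) * X) * s = s - C ((starRingEnd ℂ) w) * (X*s) := by ring
        _ = C c * p := huu
        _ = C c * ((X - C w) * s) := by rw [hfac]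
        _ = (C c * (X - C w)) * s := by ring
    have hcancel := mul_right_cancel₀ hsne h5
    have hc1 := congrArg (fun q : ℂ[X] => q.coeff 1) hcancel
    have hc0 := congrArg (fun q : ℂ[X] => q.coeff 0) hcancel
    simp [Polynomial.coeff_sub, Polynomial.coeff_one, Polynomial.coeff_C_mul,
      Polynomial.coeff_X_one, Polynomial.coeff_X_zero, Polynomial.coeff_C,
      Polynomial.mul_coeff_zero] at hc1 hc0
    -- hc1 : -(conj w) = c  (in some form), hc0 : 1 = c * (-w)
    linear_combination (- w) * hc1 - hc0
  -- roots are simple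
  have hsimple : ∀ w : ℂ, ¬ ((X - C w)^2 ∣ p) := by
    intro w hdvd
    have hwroot : p.IsRoot w := by
      have h1 : (X - C w) ∣ p := dvd_trans (dvd_pow_self _ two_ne_zero) hdvd
      exact (Polynomial.dvd_iff_isRoot).mp h1
    have hcw := hcirc w hwroot
    obtain ⟨q, hq⟩ := hdvd
    have hqne : q ≠ 0 := by
      intro h
      rw [h, mul_zero] at hq
      exact hpne hq
    have hdeg2 : r = 2 + q.natDegree := by
      have h := congrArg Polynomial.natDegree hq
      rw [hpdeg, Polynomial.natDegree_mul
        (pow_ne_zero 2 (Polynomial.X_sub_C_ne_zero w)) hqne,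
        Polynomial.natDegree_pow, Polynomial.natDegree_X_sub_C] at h
      omega
    have hqsmallN : Small N q := small_of_natDegree_lt (by omega)
    have hXqdeg : (X*q).natDegree = r - 1 := by
      rw [Polynomial.natDegree_mul Polynomial.X_ne_zero hqne, Polynomial.natDegree_X]
      omega
    have hXqsmallN : Small N (X*q) := small_of_natDegree_lt (by omega)
    have hsh1 : BB T (X*q) (X*q) = BB T q q := BB_shift T htoep hqsmallN hqsmallN
    have hsh2 : BB T (X*(X*q)) (X*q) = BB T (X*q) q := BB_shift T htoep hXqsmallN hqsmallN
    have hrel : BB T (X*(X*q) - C (2*w) * (X*q) + C (w*w) * q) (X*q) = 0 := by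
      have hp3 : X*(X*q) - C (2*w) * (X*q) + C (w*w) * q = p := by
        rw [hq]; simp only [_root_.map_mul, map_ofNat]; ring
      rw [hp3]; exact hKBB _ hpK _
    rw [BB_add_left, BB_sub_left, BB_smul_left, BB_smul_left, hsh2, hsh1] at hrel
    have hherm2 : BB T q (X*q) = (starRingEnd ℂ) (BB T (X*q) q) := BB_herm T hherm _ _
    rw [hherm2] at hrel
    have hss : BB T (X*q - C w * q) (X*q - C w * q) = 0 := by
      rw [BB_sub_left, BB_sub_right, BB_sub_right, BB_smul_left, BB_smul_left,
        BB_smul_right, BB_smul_right, hsh1, hherm2]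
      linear_combination (-(starRingEnd ℂ) w) * hrel +
        (-(BB T q q - w * (starRingEnd ℂ) (BB T (X*q) q))) * hcw
    have hKs : K (X*q - C w * q) := hKzero _ hss
    have hssmall : Small r (X*q - C w * q) := by
      apply small_of_natDegree_lt
      calc (X*q - C w * q).natDegree ≤ max (X*q).natDegree (C w * q).natDegree :=
            Polynomial.natDegree_sub_le _ _
        _ < r := by
            apply max_lt (by omega)
            have := Polynomial.natDegree_C_mul_le w q
            omega
    have hs0 := hmin _ hssmall hKs
    have hfacq : (X - C w) * q = 0 := by linear_combination hs0
    rcases mul_eq_zero.mp hfacq with h | h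
    · exact Polynomial.X_sub_C_ne_zero w h
    · exact hqne h
  -- enumeration of the r distinct roots
  obtain ⟨w, hwinj, hwroot⟩ :
      ∃ w : Fin r → ℂ, Function.Injective w ∧ ∀ k, p.IsRoot (w k) := by
    have hcardroots : Multiset.card p.roots = r := by
      rw [Polynomial.splits_iff_card_roots.mp (IsAlgClosed.splits p), hpdeg]
    have hnodup : p.roots.Nodup := by
      rw [Multiset.nodup_iff_count_le_one]
      intro w
      rw [Polynomial.count_roots]
      by_contra h
      push_neg at h
      exact hsimple w (dvd_trans (pow_dvd_pow _ (by omega))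
        (Polynomial.pow_rootMultiplicity_dvd p w))
    have hcardS : p.roots.toFinset.card = r := by
      rw [Multiset.toFinset_card_of_nodup hnodup, hcardroots]
    let e := Finset.equivFinOfCardEq hcardS
    refine ⟨fun k => (e.symm k : ℂ), ?_, ?_⟩
    · intro a b hab
      have : e.symm a = e.symm b := Subtype.ext hab
      exact e.symm.injective this
    · intro k
      have hm := (e.symm k).2
      rw [Multiset.mem_toFinset] at hm
      exact Polynomial.isRoot_of_mem_roots hm
  have hwcirc : ∀ k, (starRingEnd ℂ) (w k) * w k = 1 := fun k => hcirc _ (hwroot k)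
  -- the Lagrange-type cofactors
  set L : Fin r → ℂ[X] := fun k => p /ₘ (X - C (w k)) with hLdef
  have hLfac : ∀ k, (X - C (w k)) * L k = p := fun k =>
    (Polynomial.mul_divByMonic_eq_iff_isRoot).mpr (hwroot k)
  have hLne : ∀ k, L k ≠ 0 := by
    intro k h
    apply hpne
    rw [← hLfac k, h, mul_zero]
  have hLdeg : ∀ k, (L k).natDegree = r - 1 := by
    intro k
    have h := congrArg Polynomial.natDegree (hLfac k)
    rw [Polynomial.natDegree_mul (Polynomial.X_sub_C_ne_zero _) (hLne k),
      Polynomial.natDegree_X_sub_C, hpdeg] at h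
    omega
  have hLsmall : ∀ k, Small r (L k) :=
    fun k => small_of_natDegree_lt (by rw [hLdeg k]; omega)
  have hLeval0 : ∀ j k, j ≠ k → (L k).eval (w j) = 0 := by
    intro j k hjk
    have h := congrArg (Polynomial.eval (w j)) (hLfac k)
    rw [Polynomial.eval_mul, Polynomial.eval_sub, Polynomial.eval_X, Polynomial.eval_C] at h
    have hp0 : Polynomial.eval (w j) p = 0 := hwroot j
    rw [hp0] at h
    rcases mul_eq_zero.mp h with h1 | h1
    · exact absurd (hwinj (by linear_combination h1 : w j = w k)) hjk
    · exact h1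
  have hLevalne : ∀ k, (L k).eval (w k) ≠ 0 := by
    intro k h
    have hdvd : (X - C (w k)) ∣ L k := Polynomial.dvd_iff_isRoot.mpr h
    obtain ⟨q, hq⟩ := hdvd
    exact hsimple (w k) ⟨q, by rw [← hLfac k, hq]; ring⟩
  -- orthogonality
  set cc : Fin r → ℂ := fun k => BB T (L k) (L k) with hccdef
  have horth : ∀ j k, j ≠ k → BB T (L j) (L k) = 0 := by
    intro j k hjk
    have hs1 : Small N (L j) := small_mono (hLsmall j) hrN
    have hs2 : Small N (L k) := small_mono (hLsmall k) hrN
    have hshift := BB_shift T htoep hs1 hs2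
    have hXLj : X * L j = p + C (w j) * L j := by rw [← hLfac j]; ring
    have hXLk : X * L k = p + C (w k) * L k := by rw [← hLfac k]; ring
    simp only [hXLj, hXLk, BB_add_left, BB_add_right, BB_smul_left, BB_smul_right,
      hKBB _ hpK, hKBB' _ hpK, mul_zero, zero_add, add_zero] at hshift
    have hfactor : (w j * (starRingEnd ℂ) (w k) - 1) * BB T (L j) (L k) = 0 := by
      linear_combination hshift
    rcases mul_eq_zero.mp hfactor with h | h
    · exfalso
      apply hjk
      apply hwinj
      have h1 : w j * (starRingEnd ℂ) (w k) = 1 := by linear_combination h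
      have h2 := hwcirc k
      calc w j = w j * ((starRingEnd ℂ) (w k) * w k) := by rw [h2, mul_one]
        _ = (w j * (starRingEnd ℂ) (w k)) * w k := by ring
        _ = w k := by rw [h1, one_mul]
    · exact h
  have hccreal : ∀ k, cc k = ((cc k).re : ℂ) ∧ 0 < (cc k).re := by
    intro k
    have h0 : (0:ℂ) ≤ cc k := hpsd.dotProduct_mulVec_nonneg (vecp (N+1) (L k))
    rw [Complex.le_def] at h0
    have him' : (cc k).im = 0 := by
      have := h0.2
      simpa using this.symm
    have hre : 0 ≤ (cc k).re := by simpa using h0.1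
    have hne : cc k ≠ 0 := by
      intro h
      have hKk : K (L k) := hKzero (L k) h
      exact hLne k (hmin _ (hLsmall k) hKk)
    have heq : cc k = ((cc k).re : ℂ) := by
      apply Complex.ext <;> simp [him']
    refine ⟨heq, ?_⟩
    rcases lt_or_eq_of_le hre with h | h
    · exact h
    · exfalso; apply hne; rw [heq, ← h]; simp
  -- the weights
  set P : Fin r → ℂ := fun k =>
    cc k / ((L k).eval (w k) * (starRingEnd ℂ) ((L k).eval (w k))) with hPdef
  -- quadrature on low degrees
  have hint : ∀ u : ℂ[X], Small r u →
      u = ∑ k, C (u.eval (w k) / (L k).eval (w k)) * L k := by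
    intro u hu
    have hdiff : u - ∑ k, C (u.eval (w k) / (L k).eval (w k)) * L k = 0 := by
      apply Polynomial.eq_zero_of_natDegree_lt_card_of_eval_eq_zero _ hwinj
      · intro i
        rw [Polynomial.eval_sub, Polynomial.eval_finset_sum]
        rw [Finset.sum_eq_single i]
        · rw [Polynomial.eval_mul, Polynomial.eval_C, div_mul_cancel₀ _ (hLevalne i),
            sub_self]
        · intro b _ hbne
          rw [Polynomial.eval_mul, hLeval0 i b (Ne.symm hbne), mul_zero]
        · intro h; exact absurd (Finset.mem_univ i) h
      · rw [Fintype.card_fin]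
        have h1 : u.natDegree ≤ r - 1 := by
          rcases eq_or_ne u 0 with h0 | h0
          · simp [h0]
          · have := natDegree_lt_of_small hu h0 (by omega); omega
        have h2 : (∑ k, C (u.eval (w k) / (L k).eval (w k)) * L k).natDegree ≤ r - 1 := by
          apply Polynomial.natDegree_sum_le_of_forall_le
          intro k _
          exact le_trans (Polynomial.natDegree_C_mul_le _ _) (le_of_eq (hLdeg k))
        have h3 := Polynomial.natDegree_sub_le u
          (∑ k, C (u.eval (w k) / (L k).eval (w k)) * L k)
        omega
    exact sub_eq_zero.mp hdiff
  have hconjne : ∀ k, (starRingEnd ℂ) ((L k).eval (w k)) ≠ 0 := by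
    intro k h
    apply hLevalne k
    have := congrArg (starRingEnd ℂ) h
    simpa using this
  have hquad : ∀ u : ℂ[X], Small r u →
      BB T u 1 = ∑ k, P k * u.eval (w k) := by
    intro u hu
    have h1s : Small r (1:ℂ[X]) := by
      intro j hj
      rw [Polynomial.coeff_one]
      have : j ≠ 0 := by omega
      simp [this]
    calc BB T u 1 = BB T (∑ a, C (u.eval (w a) / (L a).eval (w a)) * L a)
          (∑ b, C ((1:ℂ[X]).eval (w b) / (L b).eval (w b)) * L b) := by
          rw [← hint u hu, ← hint 1 h1s]
      _ = ∑ a, ∑ b, (u.eval (w a) / (L a).eval (w a)) *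
            ((starRingEnd ℂ) ((1:ℂ[X]).eval (w b) / (L b).eval (w b)) * BB T (L a) (L b)) := by
          rw [BB_sum_left]
          refine Finset.sum_congr rfl fun a _ => ?_
          rw [BB_smul_left, BB_sum_right, Finset.mul_sum]
          refine Finset.sum_congr rfl fun b _ => ?_
          rw [BB_smul_right]
      _ = ∑ a, (u.eval (w a) / (L a).eval (w a)) *
            ((starRingEnd ℂ) ((1:ℂ)/ (L a).eval (w a)) * cc a) := by
          refine Finset.sum_congr rfl fun a _ => ?_
          rw [Finset.sum_eq_single a]
          · rw [Polynomial.eval_one]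
          · intro b _ hb
            rw [horth a b (Ne.symm hb), mul_zero, mul_zero]
          · intro h; exact absurd (Finset.mem_univ a) h
      _ = ∑ k, P k * u.eval (w k) := by
          refine Finset.sum_congr rfl fun k _ => ?_
          simp only [hPdef, map_div₀, _root_.map_one]
          field_simp [hLevalne k, hconjne k]
  -- quadrature for all powers
  have hquadpow : ∀ m : ℕ, m ≤ N → BB T (X ^ m) 1 = ∑ k, P k * (w k) ^ m := by
    intro m hm
    have hdecomp := Polynomial.modByMonic_add_div (X^m : ℂ[X]) p
    have hqsmall : Small (N+1-r) ((X^m : ℂ[X]) /ₘ p) := by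
      rcases eq_or_ne ((X^m : ℂ[X]) /ₘ p) 0 with h0 | h0
      · intro j hj; simp [h0]
      · apply small_of_natDegree_lt
        rw [Polynomial.natDegree_divByMonic _ hpmonic, Polynomial.natDegree_X_pow, hpdeg]
        omega
    have hKqp : K (((X^m : ℂ[X]) /ₘ p) * p) := hmulK _ hqsmall
    have hx : (X^m : ℂ[X]) = X^m %ₘ p + ((X^m : ℂ[X]) /ₘ p) * p := by
      linear_combination -hdecomp
    rw [hx, BB_add_left, hKBB _ hKqp 1, add_zero, hquad _ (hsmallmod (X^m))]
    refine Finset.sum_congr rfl fun k _ => ?_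
    congr 1
    have he := congrArg (Polynomial.eval (w k)) hdecomp
    rw [Polynomial.eval_add, Polynomial.eval_mul, Polynomial.eval_pow,
      Polynomial.eval_X] at he
    have hp0 : p.eval (w k) = 0 := hwroot k
    rw [hp0, zero_mul, add_zero] at he
    exact he
  -- identification with matrix entries
  have hBpow : ∀ m : ℕ, (hm : m < N + 1) → BB T (X ^ m) 1 = T 0 ⟨m, hm⟩ := by
    intro m hm
    rw [BB_expand]
    rw [Finset.sum_eq_single (0 : Fin (N+1))]
    · rw [Finset.sum_eq_single (⟨m, hm⟩ : Fin (N+1))]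
      · simp [Polynomial.coeff_one, Polynomial.coeff_X_pow]
      · intro b _ hb
        have hbne : (b:ℕ) ≠ m := fun hc => hb (Fin.ext hc)
        simp [Polynomial.coeff_X_pow, hbne]
      · intro h; exact absurd (Finset.mem_univ _) h
    · intro j _ hj
      apply Finset.sum_eq_zero
      intro b _
      have hjne : (j:ℕ) ≠ 0 := fun hc => hj (Fin.ext hc)
      simp [Polynomial.coeff_one, hjne]
    · intro h; exact absurd (Finset.mem_univ _) h
  have hent : ∀ m : ℕ, (hm : m < N + 1) → T 0 ⟨m, hm⟩ = ∑ k, P k * (w k) ^ m := by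
    intro m hm
    rw [← hBpow m hm, hquadpow m (by omega)]
  -- frequencies
  have hfreq : ∃ f : Fin r → ℝ, (∀ k, f k ∈ Set.Ico (0:ℝ) 1) ∧
      (∀ k, Complex.exp (2 * Real.pi * Complex.I * (f k)) = (starRingEnd ℂ) (w k)) := by
    have hpi := Real.pi_pos
    have h2pi : (0:ℝ) < 2 * Real.pi := by linarith
    refine ⟨fun k =>
      if 0 ≤ Complex.arg ((starRingEnd ℂ) (w k)) then
        Complex.arg ((starRingEnd ℂ) (w k)) / (2*Real.pi)
      else Complex.arg ((starRingEnd ℂ) (w k)) / (2*Real.pi) + 1, ?_, ?_⟩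
    · intro k
      have h1 := Complex.arg_le_pi ((starRingEnd ℂ) (w k))
      have h2 := Complex.neg_pi_lt_arg ((starRingEnd ℂ) (w k))
      dsimp only
      split_ifs with h
      · constructor
        · exact div_nonneg h (le_of_lt h2pi)
        · rw [div_lt_one h2pi]; linarith
      · push_neg at h
        constructor
        · have h3 : (-1:ℝ) ≤ Complex.arg ((starRingEnd ℂ) (w k)) / (2*Real.pi) := by
            rw [le_div_iff₀ h2pi]
            nlinarith
          linarith
        · have h4 : Complex.arg ((starRingEnd ℂ) (w k)) / (2*Real.pi) < 0 :=
            div_neg_of_neg_of_pos h h2pi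
          linarith
    · intro k
      have hnsq : Complex.normSq (w k) = 1 := by
        have h1 := hwcirc k
        have h2 : ((Complex.normSq (w k) : ℂ)) = 1 := by
          rw [← Complex.mul_conj (w k)]
          linear_combination h1
        exact_mod_cast h2
      have habs : ‖(starRingEnd ℂ) (w k)‖ = 1 := by
        rw [Complex.norm_conj, Complex.norm_def, hnsq, Real.sqrt_one]
      have hexp1 : Complex.exp ((Complex.arg ((starRingEnd ℂ) (w k)) : ℂ) * Complex.I)
          = (starRingEnd ℂ) (w k) := by
        have h5 := Complex.norm_mul_exp_arg_mul_I ((starRingEnd ℂ) (w k))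
        rw [habs] at h5
        simpa using h5
      dsimp only
      split_ifs with h
      · rw [show (2 * (Real.pi:ℂ) * Complex.I *
            ((Complex.arg ((starRingEnd ℂ) (w k)) / (2*Real.pi) : ℝ) : ℂ))
            = (Complex.arg ((starRingEnd ℂ) (w k)) : ℂ) * Complex.I from by
          push_cast
          field_simp]
        exact hexp1
      · rw [show (2 * (Real.pi:ℂ) * Complex.I *
            ((Complex.arg ((starRingEnd ℂ) (w k)) / (2*Real.pi) + 1 : ℝ) : ℂ))
            = (Complex.arg ((starRingEnd ℂ) (w k)) : ℂ) * Complex.I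
              + 2 * (Real.pi:ℂ) * Complex.I from by
          push_cast
          field_simp]
        rw [Complex.exp_add, hexp1, Complex.exp_two_pi_mul_I, mul_one]
  obtain ⟨f, hfIco, hfexp⟩ := hfreq
  -- real weights
  set pr : Fin r → ℝ := fun k => (cc k).re / Complex.normSq ((L k).eval (w k)) with hprdef
  have hprP : ∀ k, (pr k : ℂ) = P k := by
    intro k
    have h1 := (hccreal k).1
    simp only [hPdef, hprdef]
    rw [Complex.mul_conj]
    push_cast
    rw [← h1]
  have hprpos : ∀ k, 0 < pr k := by
    intro k
    apply div_pos (hccreal k).2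
    exact Complex.normSq_pos.mpr (hLevalne k)
  have hfinj : Function.Injective f := by
    intro a b hab
    apply hwinj
    have h1 : (starRingEnd ℂ) (w a) = (starRingEnd ℂ) (w b) := by
      rw [← hfexp a, ← hfexp b, hab]
    have := congrArg (starRingEnd ℂ) h1
    simpa using this
  refine ⟨f, pr, hfinj, hfIco, hprpos, ?_⟩
  intro i j
  have hterm : ∀ (k : Fin r) (a : Fin (N+1)),
      vand (N+1) (f k) a = ((starRingEnd ℂ) (w k))^(a:ℕ) := by
    intro k a
    show Complex.exp (2 * Real.pi * Complex.I * ((a:ℕ):ℂ) * ((f k : ℝ):ℂ)) = _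
    rw [← hfexp k, ← Complex.exp_nat_mul]
    congr 1
    ring
  have key : ∀ (a b : Fin (N+1)), (a:ℕ) ≤ (b:ℕ) →
      T a b = ∑ k, (pr k : ℂ) * vand (N+1) (f k) a * (starRingEnd ℂ) (vand (N+1) (f k) b) := by
    intro a b hab
    have hm : (b:ℕ) - (a:ℕ) < N + 1 := by omega
    have hT : T a b = T 0 ⟨(b:ℕ) - (a:ℕ), hm⟩ := by
      apply htoep
      have hv : ((⟨(b:ℕ) - (a:ℕ), hm⟩ : Fin (N+1)) : ℕ) = (b:ℕ) - (a:ℕ) := rfl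
      rw [hv]
      simp only [Fin.val_zero]
      omega
    rw [hT, hent _ hm]
    refine Finset.sum_congr rfl fun k _ => ?_
    rw [hterm, hterm, hprP k, map_pow, Complex.conj_conj]
    have h1 : ((starRingEnd ℂ) (w k))^(a:ℕ) * (w k)^(a:ℕ) = 1 := by
      rw [← mul_pow, hwcirc k, one_pow]
    have h2 : (w k)^(b:ℕ) = (w k)^(a:ℕ) * (w k)^((b:ℕ)-(a:ℕ)) := by
      rw [← pow_add]
      congr 1
      omega
    rw [h2]
    linear_combination (-(P k * (w k)^((b:ℕ)-(a:ℕ)))) * h1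
  rcases le_or_gt (i:ℕ) (j:ℕ) with hij | hij
  · exact key i j hij
  · have hji := key j i (le_of_lt hij)
    have hsym : T i j = (starRingEnd ℂ) (T j i) := (hherm.apply i j).symm
    rw [hsym, hji, map_sum]
    refine Finset.sum_congr rfl fun k _ => ?_
    simp only [_root_.map_mul, Complex.conj_conj, Complex.conj_ofReal, hterm, map_pow]
    ring
end

section
/- The Vandermonde decomposition of a positive semidefinite Toeplitz matrix of rank r < n is unique: if T = Σ_{k=1}^r p_k v(f_k) v(f_k)* = Σ_{k=1}^r q_k v(g_k) v(g_k)* with distinct f_k's, distinct g_k's, and all p_k, q_k > 0, then the multisets {(f_k, p_k)} and {(g_k, q_k)} coincide. -/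
open Complex
open scoped ComplexOrder

lemma vand_pow (n : ℕ) (f : ℝ) (j : Fin n) :
    vand n f j = Complex.exp (2 * Real.pi * Complex.I * (f : ℂ)) ^ (j : ℕ) := by
  rw [vand, ← Complex.exp_nat_mul]
  congr 1
  ring

lemma vand_conj (n : ℕ) (f : ℝ) (j : Fin n) :
    (starRingEnd ℂ) (vand n f j) = star (Complex.exp (2 * Real.pi * Complex.I * (f : ℂ))) ^ (j : ℕ) := by
  have h1 : (starRingEnd ℂ) (2 * Real.pi * Complex.I * (j.val : ℂ) * (f : ℂ))
      = (j.val : ℂ) * ((starRingEnd ℂ) (2 * Real.pi * Complex.I * (f : ℂ))) := by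
    simp only [map_mul, Complex.conj_I, Complex.conj_ofReal, map_natCast, map_ofNat]
    ring
  calc (starRingEnd ℂ) (vand n f j)
      = Complex.exp ((starRingEnd ℂ) (2 * Real.pi * Complex.I * (j.val : ℂ) * (f : ℂ))) :=
        (Complex.exp_conj _).symm
    _ = Complex.exp ((j.val : ℂ) * ((starRingEnd ℂ) (2 * Real.pi * Complex.I * (f : ℂ)))) := by
        rw [h1]
    _ = Complex.exp ((starRingEnd ℂ) (2 * Real.pi * Complex.I * (f : ℂ))) ^ (j : ℕ) :=
        Complex.exp_nat_mul _ _
    _ = star (Complex.exp (2 * Real.pi * Complex.I * (f : ℂ))) ^ (j : ℕ) := by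
        rw [Complex.exp_conj]; rfl

lemma exp2pi_unit (f : ℝ) :
    star (Complex.exp (2 * Real.pi * Complex.I * (f : ℂ)))
      * Complex.exp (2 * Real.pi * Complex.I * (f : ℂ)) = 1 := by
  have : star (Complex.exp (2 * Real.pi * Complex.I * (f : ℂ)))
      = Complex.exp ((starRingEnd ℂ) (2 * Real.pi * Complex.I * (f : ℂ))) :=
    (Complex.exp_conj _).symm
  rw [this, ← Complex.exp_add]
  have h0 : (starRingEnd ℂ) (2 * Real.pi * Complex.I * (f : ℂ))
      + 2 * Real.pi * Complex.I * (f : ℂ) = 0 := by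
    simp only [map_mul, Complex.conj_I, Complex.conj_ofReal, map_ofNat]
    ring
  rw [h0, Complex.exp_zero]

lemma exp2pi_injOn {a b : ℝ} (ha : a ∈ Set.Ico (0:ℝ) 1) (hb : b ∈ Set.Ico (0:ℝ) 1)
    (h : Complex.exp (2 * Real.pi * Complex.I * a) = Complex.exp (2 * Real.pi * Complex.I * b)) :
    a = b := by
  rw [Complex.exp_eq_exp_iff_exists_int] at h
  obtain ⟨m, hm⟩ := h
  have hπ : (2 * (Real.pi:ℂ) * Complex.I) ≠ 0 := by
    simp [Real.pi_ne_zero, Complex.I_ne_zero]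
  have h2 : (2 * (Real.pi:ℂ) * Complex.I) * a = (2 * (Real.pi:ℂ) * Complex.I) * (b + m) := by
    rw [hm]; ring
  have h3 : (a:ℂ) = (b:ℝ) + (m:ℤ) := by exact_mod_cast mul_left_cancel₀ hπ h2
  have h4 : a = b + (m:ℝ) := by exact_mod_cast h3
  have hm1 : (-1:ℝ) < m := by
    have := ha.1; have := hb.2; linarith
  have hm2 : (m:ℝ) < 1 := by
    have := ha.2; have := hb.1; linarith
  have : m = 0 := by
    have h5 : (-1:ℤ) < m := by exact_mod_cast hm1
    have h6 : m < 1 := by exact_mod_cast hm2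
    omega
  simp [this] at h4; linarith [h4]

lemma key_measure {r n : ℕ} (hrn : r < n) (z w : Fin r → ℂ)
    (hz1 : ∀ k, star (z k) * z k = 1) (hw1 : ∀ k, star (w k) * w k = 1)
    (hzinj : Function.Injective z) (hwinj : Function.Injective w)
    (p q : Fin r → ℝ) (hp : ∀ k, 0 < p k) (hq : ∀ k, 0 < q k)
    (hm : ∀ a b : Fin n, ∑ k, (p k:ℂ) * z k ^ (a:ℕ) * star (z k) ^ (b:ℕ)
        = ∑ k, (q k:ℂ) * w k ^ (a:ℕ) * star (w k) ^ (b:ℕ)) :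
    ∀ k, ∃ j, w j = z k ∧ q j = p k := by
  have hn : 1 ≤ n := by omega
  set S : Finset ℂ := (Finset.image z Finset.univ) ∪ (Finset.image w Finset.univ) with hS
  set c : ℂ → ℂ := fun x =>
    (∑ k ∈ Finset.univ.filter (fun k => z k = x), (p k:ℂ))
      - ∑ k ∈ Finset.univ.filter (fun k => w k = x), (q k:ℂ) with hc
  have hzmem : ∀ k, z k ∈ S := fun k => Finset.mem_union_left _ (Finset.mem_image_of_mem z (Finset.mem_univ k))
  have hwmem : ∀ k, w k ∈ S := fun k => Finset.mem_union_right _ (Finset.mem_image_of_mem w (Finset.mem_univ k))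
  have hfiber : ∀ (v : Fin r → ℂ) (hv : ∀ k, v k ∈ S) (u : Fin r → ℝ) (a b : ℕ),
      ∑ x ∈ S, (∑ k ∈ Finset.univ.filter (fun k => v k = x), (u k:ℂ)) * x ^ a * star x ^ b
        = ∑ k, (u k:ℂ) * v k ^ a * star (v k) ^ b := by
    intro v hv u a b
    rw [← Finset.sum_fiberwise_of_maps_to (fun k _ => hv k)
      (fun k => (u k:ℂ) * v k ^ a * star (v k) ^ b)]
    refine Finset.sum_congr rfl fun x hx => ?_
    rw [Finset.sum_mul, Finset.sum_mul]
    refine Finset.sum_congr rfl fun k hk => ?_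
    rw [(Finset.mem_filter.mp hk).2]
  have momS : ∀ a b : Fin n, ∑ x ∈ S, c x * x ^ (a:ℕ) * star x ^ (b:ℕ) = 0 := by
    intro a b
    simp only [hc, sub_mul]
    rw [Finset.sum_sub_distrib, hfiber z hzmem p, hfiber w hwmem q, hm a b, sub_self]
  -- unit modulus of members of S
  have hunit : ∀ x ∈ S, star x * x = 1 := by
    intro x hx
    rcases Finset.mem_union.mp hx with h | h <;>
      · obtain ⟨k, -, rfl⟩ := Finset.mem_image.mp h
        first | exact hz1 k | exact hw1 k
  have momj : ∀ j : ℕ, j ≤ 2*n-2 →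
      ∑ x ∈ S, (c x * star x ^ (n-1)) * x ^ j = 0 := by
    intro j hj
    by_cases hcase : j ≤ n - 1
    · have := momS ⟨j, by omega⟩ ⟨n-1, by omega⟩
      rw [← this]
      exact Finset.sum_congr rfl fun x hx => by ring
    · have := momS ⟨j - (n-1), by omega⟩ ⟨0, by omega⟩
      rw [← this]
      refine Finset.sum_congr rfl fun x hx => ?_
      have hx1 : star x * x = 1 := hunit x hx
      have h1 : (n-1) + (j - (n-1)) = j := by omega
      have hpow : star x ^ (n-1) * x ^ j = x ^ (j - (n-1)) := by
        calc star x ^ (n-1) * x ^ j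
            = star x ^ (n-1) * (x ^ (n-1) * x ^ (j - (n-1))) := by rw [← pow_add, h1]
          _ = (star x * x) ^ (n-1) * x ^ (j - (n-1)) := by rw [mul_pow]; ring
          _ = x ^ (j - (n-1)) := by rw [hx1, one_pow, one_mul]
      show c x * star x ^ (n-1) * x ^ j = c x * x ^ (j - (n-1)) * star x ^ 0
      rw [pow_zero, mul_one, mul_assoc, hpow]
  have hcard : S.card ≤ 2 * r := by
    calc S.card ≤ (Finset.image z Finset.univ).card + (Finset.image w Finset.univ).card :=
          Finset.card_union_le _ _
      _ ≤ r + r :=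
          Nat.add_le_add (Finset.card_image_le.trans (by simp))
            (Finset.card_image_le.trans (by simp))
      _ ≤ 2 * r := by omega
  -- c vanishes on S
  have hc0 : ∀ x ∈ S, c x = 0 := by
    intro a ha
    set L : Polynomial ℂ := Lagrange.basis S id a with hL
    have hinj : Set.InjOn (id : ℂ → ℂ) S := fun x _ y _ h => h
    have hdeg : L.natDegree = S.card - 1 := Lagrange.natDegree_basis hinj ha
    have hsum0 : ∑ x ∈ S, (c x * star x ^ (n-1)) * L.eval x = 0 := by
      have heval : ∀ x : ℂ, L.eval x = ∑ j ∈ Finset.range (L.natDegree + 1), L.coeff j * x ^ j :=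
        fun x => Polynomial.eval_eq_sum_range x
      calc ∑ x ∈ S, (c x * star x ^ (n-1)) * L.eval x
          = ∑ j ∈ Finset.range (L.natDegree + 1), L.coeff j *
              ∑ x ∈ S, (c x * star x ^ (n-1)) * x ^ j := by
            simp_rw [heval, Finset.mul_sum]
            rw [Finset.sum_comm]
            exact Finset.sum_congr rfl fun j hj =>
              Finset.sum_congr rfl fun x hx => by ring
        _ = 0 := by
            refine Finset.sum_eq_zero fun j hj => ?_
            rw [momj j ?_, mul_zero]
            have := Finset.mem_range.mp hj
            omega
    have hsuma : ∑ x ∈ S, (c x * star x ^ (n-1)) * L.eval x = c a * star a ^ (n-1) := by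
      rw [Finset.sum_eq_single a]
      · rw [show L.eval a = L.eval (id a) from rfl, Lagrange.eval_basis_self hinj ha, mul_one]
      · intro x hx hxa
        rw [show L.eval x = L.eval (id x) from rfl,
          Lagrange.eval_basis_of_ne (Ne.symm hxa) hx, mul_zero]
      · intro h; exact absurd ha h
    have ha0 : a ≠ 0 := by
      intro h
      have := hunit a ha
      rw [h] at this; simp at this
    have : c a * star a ^ (n-1) = 0 := by rw [← hsuma, hsum0]
    rcases mul_eq_zero.mp this with h | h
    · exact h
    · exact absurd h (pow_ne_zero _ (star_ne_zero.mpr ha0))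
  -- extract the matching
  intro k
  have hck := hc0 (z k) (hzmem k)
  have hzfil : Finset.univ.filter (fun j => z j = z k) = {k} := by
    ext j; simp only [Finset.mem_filter, Finset.mem_univ, true_and, Finset.mem_singleton]
    exact ⟨fun h => hzinj h, fun h => by rw [h]⟩
  rw [hc, sub_eq_zero] at hck
  rw [hzfil, Finset.sum_singleton] at hck
  -- hck : (p k : ℂ) = ∑ j ∈ filter (w · = z k), q j
  have hne : (Finset.univ.filter (fun j => w j = z k)).Nonempty := by
    rw [Finset.nonempty_iff_ne_empty]
    intro h
    rw [h, Finset.sum_empty] at hck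
    exact absurd (by exact_mod_cast hck : p k = 0) (hp k).ne'
  obtain ⟨j, hj⟩ := hne
  have hjw : w j = z k := (Finset.mem_filter.mp hj).2
  have hwfil : Finset.univ.filter (fun j' => w j' = z k) = {j} := by
    ext j'; simp only [Finset.mem_filter, Finset.mem_univ, true_and, Finset.mem_singleton]
    exact ⟨fun h => hwinj (h.trans hjw.symm), fun h => by rw [h, hjw]⟩
  rw [hwfil, Finset.sum_singleton] at hck
  exact ⟨j, hjw, by exact_mod_cast hck.symm⟩

/-- Uniqueness of the Vandermonde decomposition of a PSD Toeplitz matrix of rank . -/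
theorem vandermonde_decomposition_unique (n r : ℕ)
    (T : Matrix (Fin n) (Fin n) ℂ)
    (hpsd : T.PosSemidef)
    (htoep : ∀ j k j' k' : Fin n,
      ((j.val : ℤ) - (k.val : ℤ) = (j'.val : ℤ) - (k'.val : ℤ)) → T j k = T j' k')
    (hrank : T.rank = r) (hrn : r < n)
    (f g : Fin r → ℝ) (p q : Fin r → ℝ)
    (hf : ∀ k, f k ∈ Set.Ico (0 : ℝ) 1) (hg : ∀ k, g k ∈ Set.Ico (0 : ℝ) 1)
    (hfinj : Function.Injective f) (hginj : Function.Injective g)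
    (hp : ∀ k, 0 < p k) (hq : ∀ k, 0 < q k)
    (hTf : ∀ i j : Fin n,
      T i j = ∑ k, (p k : ℂ) * vand n (f k) i * (starRingEnd ℂ) (vand n (f k) j))
    (hTg : ∀ i j : Fin n,
      T i j = ∑ k, (q k : ℂ) * vand n (g k) i * (starRingEnd ℂ) (vand n (g k) j)) :
    ∃ σ : Equiv.Perm (Fin r), ∀ k, g (σ k) = f k ∧ q (σ k) = p k := by
  set z : Fin r → ℂ := fun k => Complex.exp (2 * Real.pi * Complex.I * (f k : ℂ)) with hzdef
  set w : Fin r → ℂ := fun k => Complex.exp (2 * Real.pi * Complex.I * (g k : ℂ)) with hwdef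
  have hz1 : ∀ k, star (z k) * z k = 1 := fun k => exp2pi_unit (f k)
  have hw1 : ∀ k, star (w k) * w k = 1 := fun k => exp2pi_unit (g k)
  have hzinj : Function.Injective z := fun k k' h =>
    hfinj (exp2pi_injOn (hf k) (hf k') h)
  have hwinj : Function.Injective w := fun k k' h =>
    hginj (exp2pi_injOn (hg k) (hg k') h)
  have hm : ∀ a b : Fin n, ∑ k, (p k:ℂ) * z k ^ (a:ℕ) * star (z k) ^ (b:ℕ)
      = ∑ k, (q k:ℂ) * w k ^ (a:ℕ) * star (w k) ^ (b:ℕ) := by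
    intro a b
    have := (hTf a b).symm.trans (hTg a b)
    simp only [vand_pow, map_pow, Complex.star_def, hzdef, hwdef] at this ⊢
    exact this
  have hex : ∀ k, ∃ j, w j = z k ∧ q j = p k :=
    key_measure hrn z w hz1 hw1 hzinj hwinj p q hp hq hm
  choose σ0 hσ1 hσ2 using hex
  have hσinj : Function.Injective σ0 := fun k k' h =>
    hzinj (by rw [← hσ1 k, ← hσ1 k', h])
  have hbij : Function.Bijective σ0 := Finite.injective_iff_bijective.mp hσinj
  refine ⟨Equiv.ofBijective σ0 hbij, fun k => ⟨?_, hσ2 k⟩⟩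
  exact exp2pi_injOn (hg _) (hf _) (hσ1 k)
end

section
/- Let S be a positive semidefinite block Toeplitz matrix with q×q blocks, each block of size t×t, and suppose rank(S) = r. Then there exist frequencies f_1,...,f_r ∈ [0,1) and vectors g_1,...,g_r ∈ ℂ^t such that S = Σ_{j=1}^r (u_q(f_j) ⊗ g_j)(u_q(f_j) ⊗ g_j)*, where u_q(f) ∈ ℂ^q has entries e^{2πi a f}, a = 0,...,q−1; moreover the a-th block diagonal of S equals G · diag(e^{2πi a f_1},...,e^{2πi a f_r}) · G*, where G = [g_1,...,g_r]. -/
open Complex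
open scoped ComplexOrder

section Helpers
open Matrix Module


lemma freq_cast_eq (x : ℝ) :
    (2:ℂ) * Real.pi * Complex.I * ((x / (2 * Real.pi) : ℝ) : ℂ) = (x : ℂ) * Complex.I := by
  have h2pi : (Real.pi : ℂ) ≠ 0 := by exact_mod_cast Real.pi_pos.ne'
  push_cast
  field_simp

lemma circle_exists_freq (z : ℂ) (hz : ‖z‖ = 1) :
    ∃ f ∈ Set.Ico (0:ℝ) 1, Complex.exp (2 * Real.pi * Complex.I * (f:ℂ)) = z := by
  have habs : ‖z‖ = 1 := hz
  have hz' : Complex.exp ((z.arg : ℂ) * Complex.I) = z := by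
    have := Complex.norm_mul_exp_arg_mul_I z
    rwa [habs, Complex.ofReal_one, one_mul] at this
  have hpi : (0:ℝ) < Real.pi := Real.pi_pos
  have harg1 : z.arg ≤ Real.pi := Complex.arg_le_pi z
  have harg2 : -Real.pi < z.arg := Complex.neg_pi_lt_arg z
  rcases le_or_gt 0 z.arg with h0 | h0
  · refine ⟨z.arg / (2 * Real.pi), ⟨by positivity, ?_⟩, ?_⟩
    · rw [div_lt_one (by positivity)]
      nlinarith
    · rw [freq_cast_eq, hz']
  · refine ⟨z.arg / (2 * Real.pi) + 1, ⟨?_, ?_⟩, ?_⟩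
    · have h1 : -(2 * Real.pi) < z.arg := by nlinarith
      have : -(1:ℝ) < z.arg / (2 * Real.pi) := by
        rw [neg_lt, ← neg_div, div_lt_one (by positivity)]
        linarith
      linarith
    · have : z.arg / (2 * Real.pi) < 0 := div_neg_of_neg_of_pos h0 (by positivity)
      linarith
    · have hc : (2:ℂ) * Real.pi * Complex.I * ((z.arg / (2 * Real.pi) + 1 : ℝ) : ℂ)
          = (2:ℂ) * Real.pi * Complex.I * ((z.arg / (2 * Real.pi) : ℝ) : ℂ)
            + 2 * Real.pi * Complex.I := by
        push_cast
        ring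
      rw [hc, freq_cast_eq, Complex.exp_add, hz', Complex.exp_two_pi_mul_I, mul_one]


lemma psd_factor {ι : Type} [Fintype ι] [DecidableEq ι] {r : ℕ}
    (S : Matrix ι ι ℂ) (hpsd : S.PosSemidef) (hrank : S.rank = r) :
    ∃ G : Matrix (Fin r) ι ℂ, ∀ x y, S x y = ∑ k, (starRingEnd ℂ) (G k x) * G k y := by
  have hH := hpsd.isHermitian
  have hcard : Fintype.card {m // hH.eigenvalues m ≠ 0} = r := by
    rw [← hH.rank_eq_card_non_zero_eigs, hrank]
  let e : {m // hH.eigenvalues m ≠ 0} ≃ Fin r := Fintype.equivFinOfCardEq hcard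
  set V : Matrix ι ι ℂ := (hH.eigenvectorUnitary : Matrix ι ι ℂ) with hV
  refine ⟨fun k x => (Real.sqrt (hH.eigenvalues (e.symm k)) : ℂ) * (starRingEnd ℂ) (V x (e.symm k)), fun x y => ?_⟩
  have hco : ∀ s : ℝ, (RCLike.ofReal s : ℂ) = Complex.ofReal s := fun _ => rfl
  set F : ι → ℂ := fun m => (hH.eigenvalues m : ℂ) * (V x m * (starRingEnd ℂ) (V y m)) with hF
  have hspec : S x y = ∑ m, F m := by
    conv_lhs => rw [hH.spectral_theorem, Unitary.conjStarAlgAut_apply]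
    rw [Matrix.mul_apply]
    refine Finset.sum_congr rfl fun m _ => ?_
    rw [Matrix.mul_diagonal]
    simp only [hF, Matrix.conjTranspose_apply, Matrix.star_apply, Function.comp_apply, RCLike.star_def, hco]
    ring

  rw [hspec]
  have hterm : ∀ k : Fin r,
      (starRingEnd ℂ) ((Real.sqrt (hH.eigenvalues (e.symm k)) : ℂ) * (starRingEnd ℂ) (V x (e.symm k)))
        * ((Real.sqrt (hH.eigenvalues (e.symm k)) : ℂ) * (starRingEnd ℂ) (V y (e.symm k)))
      = F (e.symm k) := by
    intro k
    simp only [_root_.map_mul, Complex.conj_conj, Complex.conj_ofReal, hF]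
    have h2 : (Real.sqrt (hH.eigenvalues (e.symm k)) : ℂ) * (Real.sqrt (hH.eigenvalues (e.symm k)) : ℂ)
        = (hH.eigenvalues (e.symm k) : ℂ) := by
      rw [← Complex.ofReal_mul, Real.mul_self_sqrt (hpsd.eigenvalues_nonneg _)]
    linear_combination (V x (e.symm k) * (starRingEnd ℂ) (V y (e.symm k))) * h2
  calc ∑ m, F m = ∑ m : {m // hH.eigenvalues m ≠ 0}, F m := by
        rw [← Finset.sum_filter_of_ne (p := fun m => hH.eigenvalues m ≠ 0) (fun m _ h => by
          intro h0; apply h; simp [hF, h0] at h0 ⊢)]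
        · exact (Finset.sum_subtype _ (by simp) F)
    _ = ∑ k, F (e.symm k) := (Equiv.sum_comp e.symm (fun m => F m)).symm
    _ = _ := by exact Finset.sum_congr rfl fun k _ => (hterm k).symm

open Complex Matrix Module

variable {E : Type} [NormedAddCommGroup E] [InnerProductSpace ℂ E] [FiniteDimensional ℂ E]

local notation "⟪" x ", " y "⟫" => @inner ℂ _ _ x y

lemma aux_basis {ι' : Type} [Fintype ι'] [DecidableEq ι'] (eig : ι' → ℝ)
    (hnn : ∀ m, 0 ≤ eig m) (X : ι' → E)
    (hXX : ∀ m m', ⟪X m, X m'⟫ = if m = m' then (eig m : ℂ) else 0) :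
    ∃ b : OrthonormalBasis
        ({m // eig m ≠ 0} ⊕ Fin (finrank ℂ E - Fintype.card {m // eig m ≠ 0})) ℂ E,
      ∀ m : {m // eig m ≠ 0}, b (Sum.inl m) = ((Real.sqrt (eig m.1) : ℂ))⁻¹ • X m.1 := by
  set u : ι' → E := fun m => ((Real.sqrt (eig m) : ℂ))⁻¹ • X m with hu
  have hortho : Orthonormal ℂ (fun m : {m // eig m ≠ 0} => u m.1) := by
    rw [orthonormal_iff_ite]
    rintro ⟨m, hm⟩ ⟨m', hm'⟩
    simp only [hu, inner_smul_left, inner_smul_right, hXX, Subtype.mk_eq_mk, map_inv₀,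
      Complex.conj_ofReal]
    by_cases hmm : m = m'
    · subst hmm
      simp only [if_pos rfl]
      have hpos : 0 < eig m := lt_of_le_of_ne (hnn m) (Ne.symm hm)
      have hs : (Real.sqrt (eig m) : ℂ) ≠ 0 := by
        simpa using (Real.sqrt_ne_zero'.mpr hpos)
      field_simp
      rw [if_pos trivial, if_pos trivial, mul_one, ← Complex.ofReal_pow, Real.sq_sqrt (hnn m)]
    · simp [hmm]
  have hli := hortho.linearIndependent
  have hle : Fintype.card {m // eig m ≠ 0} ≤ finrank ℂ E :=
    hli.fintype_card_le_finrank
  have hcard : finrank ℂ E = Fintype.card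
      ({m // eig m ≠ 0} ⊕ Fin (finrank ℂ E - Fintype.card {m // eig m ≠ 0})) := by
    rw [Fintype.card_sum, Fintype.card_fin]
    omega
  set v₁ : ({m // eig m ≠ 0} ⊕ Fin (finrank ℂ E - Fintype.card {m // eig m ≠ 0})) → E := Sum.elim (fun m => u m.1) (fun _ => 0) with hv₁
  set s₁ : Set ({m // eig m ≠ 0} ⊕ Fin (finrank ℂ E - Fintype.card {m // eig m ≠ 0})) := Set.range Sum.inl with hs₁
  have hres : Orthonormal ℂ (s₁.restrict v₁) := by
    let e₁ := Equiv.ofInjective (Sum.inl : {m // eig m ≠ 0} → ({m // eig m ≠ 0} ⊕ Fin (finrank ℂ E - Fintype.card {m // eig m ≠ 0}))) Sum.inl_injective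
    have hcomp : s₁.restrict v₁ = (fun m : {m // eig m ≠ 0} => u m.1) ∘ e₁.symm := by
      funext z
      have : Sum.inl (e₁.symm z) = z.1 := Equiv.apply_ofInjective_symm _ z
      change v₁ z.1 = _; rw [← this]; rfl
    rw [hcomp]
    exact hortho.comp _ e₁.symm.injective
  obtain ⟨b, hb⟩ := hres.exists_orthonormalBasis_extension_of_card_eq hcard
  exact ⟨b, fun m => hb (Sum.inl m) (Set.mem_range_self m)⟩

lemma gram_eq_exists_isometry {ι' : Type} [Fintype ι'] [DecidableEq ι']
    (x y : ι' → E) (h : ∀ c d, ⟪x c, x d⟫ = ⟪y c, y d⟫) :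
    ∃ T : E ≃ₗᵢ[ℂ] E, ∀ c, T (x c) = y c := by
  classical
  set H : Matrix ι' ι' ℂ := Matrix.of (fun c d => ⟪x c, x d⟫) with hHdef
  have hco : ∀ s : ℝ, (RCLike.ofReal s : ℂ) = Complex.ofReal s := fun _ => rfl
  have hH : H.IsHermitian := by
    ext c d
    simp only [Matrix.conjTranspose_apply, Matrix.of_apply, RCLike.star_def, hHdef]
    exact inner_conj_symm _ _
  have hP : H.PosSemidef := by
    refine posSemidef_iff_dotProduct_mulVec.mpr ⟨hH, fun z => ?_⟩
    have hz : dotProduct (star z) (H.mulVec z) = ⟪∑ c, z c • x c, ∑ d, z d • x d⟫ := by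
      rw [sum_inner]
      simp only [dotProduct, Matrix.mulVec, Pi.star_apply, RCLike.star_def]
      refine Finset.sum_congr rfl fun c _ => ?_
      rw [inner_smul_left, inner_sum, Finset.mul_sum, Finset.mul_sum]
      refine Finset.sum_congr rfl fun d _ => ?_
      rw [inner_smul_right]
      simp only [hHdef, Matrix.of_apply]
      ring
    rw [hz, inner_self_eq_norm_sq_to_K]
    norm_cast
    positivity
  set eig := hH.eigenvalues with heig
  set V : Matrix ι' ι' ℂ := (hH.eigenvectorUnitary : Matrix ι' ι' ℂ) with hV
  have hVHV : (star V) * H * V = Matrix.diagonal (RCLike.ofReal ∘ eig) :=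
    by have := hH.conjStarAlgAut_star_eigenvectorUnitary; rwa [Unitary.conjStarAlgAut_star_apply] at this
  have hVV : V * (star V) = 1 := Matrix.mem_unitaryGroup_iff.mp hH.eigenvectorUnitary.2
  -- the transformed vector families
  set X : ι' → E := fun m => ∑ c, V c m • x c with hX
  set Y : ι' → E := fun m => ∑ c, V c m • y c with hY
  have expand : ∀ (w : ι' → E) (m m' : ι'),
      ⟪∑ c, V c m • w c, ∑ d, V d m' • w d⟫
        = ∑ c, (starRingEnd ℂ) (V c m) * ∑ d, (⟪w c, w d⟫ * V d m') := by
    intro w m m'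
    rw [sum_inner]
    refine Finset.sum_congr rfl fun c _ => ?_
    rw [inner_smul_left, inner_sum]
    congr 1
    refine Finset.sum_congr rfl fun d _ => ?_
    rw [inner_smul_right]
    ring
  have hgram : ∀ m m' : ι',
      (∑ c, (starRingEnd ℂ) (V c m) * ∑ d, (⟪x c, x d⟫ * V d m'))
        = if m = m' then (eig m : ℂ) else 0 := by
    intro m m'
    have h1 : ((star V) * H * V) m m' = ∑ c, (starRingEnd ℂ) (V c m) * ∑ d, (⟪x c, x d⟫ * V d m') := by
      rw [Matrix.mul_assoc, Matrix.mul_apply]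
      refine Finset.sum_congr rfl fun c _ => ?_
      rw [Matrix.star_apply, Matrix.mul_apply, RCLike.star_def]
      congr 1
    rw [← h1, hVHV, Matrix.diagonal_apply]
    split <;> simp [hco]
  have hXX : ∀ m m', ⟪X m, X m'⟫ = if m = m' then (eig m : ℂ) else 0 := by
    intro m m'; rw [hX]; rw [expand x m m', hgram]
  have hYY : ∀ m m', ⟪Y m, Y m'⟫ = if m = m' then (eig m : ℂ) else 0 := by
    intro m m'
    rw [hY]
    rw [expand y m m']
    rw [← hgram m m']
    simp_rw [h]
  have hnn : ∀ m, 0 ≤ eig m := fun m => hP.eigenvalues_nonneg m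
  obtain ⟨b₁, hb₁⟩ := aux_basis eig hnn X hXX
  obtain ⟨b₂, hb₂⟩ := aux_basis eig hnn Y hYY
  refine ⟨b₁.repr.trans b₂.repr.symm, fun c₀ => ?_⟩
  have hTX : ∀ m, (b₁.repr.trans b₂.repr.symm) (X m) = Y m := by
    intro m
    by_cases hm : eig m = 0
    · have hX0 : X m = 0 := by
        rw [← inner_self_eq_zero (𝕜 := ℂ)]
        rw [hXX m m, if_pos rfl, hm, Complex.ofReal_zero]
      have hY0 : Y m = 0 := by
        rw [← inner_self_eq_zero (𝕜 := ℂ)]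
        rw [hYY m m, if_pos rfl, hm, Complex.ofReal_zero]
      rw [hX0, hY0, map_zero]
    · have hs : (Real.sqrt (eig m) : ℂ) ≠ 0 := by
        simpa using Real.sqrt_ne_zero'.mpr (lt_of_le_of_ne (hnn m) (Ne.symm hm))
      have hX1 : X m = (Real.sqrt (eig m) : ℂ) • b₁ (Sum.inl ⟨m, hm⟩) := by
        rw [hb₁ ⟨m, hm⟩, smul_smul, mul_inv_cancel₀ hs, one_smul]
      have hY1 : Y m = (Real.sqrt (eig m) : ℂ) • b₂ (Sum.inl ⟨m, hm⟩) := by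
        rw [hb₂ ⟨m, hm⟩, smul_smul, mul_inv_cancel₀ hs, one_smul]
      rw [hX1, hY1, LinearIsometryEquiv.map_smul]
      congr 1
      rw [LinearIsometryEquiv.trans_apply, b₁.repr_self, b₂.repr_symm_single]
  -- reconstruction
  have hrec : ∀ (w : ι' → E) (c₀ : ι'),
      ∑ m, (starRingEnd ℂ) (V c₀ m) • (∑ c, V c m • w c) = w c₀ := by
    intro w c₀
    have h2 : ∑ m, (starRingEnd ℂ) (V c₀ m) • (∑ c, V c m • w c)
        = ∑ c, ((V * star V) c c₀) • w c := by
      simp only [Finset.smul_sum]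
      rw [Finset.sum_comm]
      refine Finset.sum_congr rfl fun c _ => ?_
      rw [Matrix.mul_apply, Finset.sum_smul]
      refine Finset.sum_congr rfl fun m _ => ?_
      rw [smul_smul, Matrix.star_apply, RCLike.star_def, mul_comm]
    rw [h2, hVV]
    simp [Matrix.one_apply, ite_smul]
  calc (b₁.repr.trans b₂.repr.symm) (x c₀)
      = (b₁.repr.trans b₂.repr.symm) (∑ m, (starRingEnd ℂ) (V c₀ m) • X m) := by
        rw [hrec x c₀]
    _ = ∑ m, (starRingEnd ℂ) (V c₀ m) • (b₁.repr.trans b₂.repr.symm) (X m) := by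
        rw [map_sum]
        exact Finset.sum_congr rfl fun m _ => by rw [LinearIsometryEquiv.map_smul]
    _ = ∑ m, (starRingEnd ℂ) (V c₀ m) • Y m := by
        exact Finset.sum_congr rfl fun m _ => by rw [hTX m]
    _ = y c₀ := hrec y c₀



lemma isometry_eigenbasis (n : ℕ) :
    ∀ (E : Type) (_ : NormedAddCommGroup E) (_ : InnerProductSpace ℂ E)
      (_ : FiniteDimensional ℂ E), finrank ℂ E = n → ∀ T : E ≃ₗᵢ[ℂ] E,
      ∃ (v : Fin n → E) (μ : Fin n → ℂ), Orthonormal ℂ v ∧ (∀ l, ‖μ l‖ = 1) ∧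
        ∀ l, T (v l) = μ l • v l := by
  induction n with
  | zero =>
    intro E _ _ _ hn T
    refine ⟨fun l => l.elim0, fun l => l.elim0, ⟨fun l => l.elim0, fun l => l.elim0⟩,
      fun l => l.elim0, fun l => l.elim0⟩
  | succ n ih =>
    intro E _ _ _ hn T
    have : Nontrivial E := Module.nontrivial_of_finrank_eq_succ hn
    obtain ⟨μ, hμ⟩ := Module.End.exists_eigenvalue
      (T.toLinearEquiv.toLinearMap : Module.End ℂ E)
    obtain ⟨v, hv⟩ := hμ.exists_hasEigenvector
    have hv0 : v ≠ 0 := hv.right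
    have hTv : T v = μ • v := hv.apply_eq_smul
    set v₁ : E := ((‖v‖ : ℂ))⁻¹ • v with hv₁
    have hv₁0 : v₁ ≠ 0 := by
      simp only [hv₁, smul_ne_zero_iff]
      constructor
      · simp [norm_ne_zero_iff.mpr hv0]
      · exact hv0
    have hnorm1 : ‖v₁‖ = 1 := by
      rw [hv₁, norm_smul]
      simp [norm_ne_zero_iff.mpr hv0]
    have hTv₁ : T v₁ = μ • v₁ := by
      rw [hv₁, LinearIsometryEquiv.map_smul, hTv, smul_comm]
    have hμ1 : ‖μ‖ = 1 := by
      have h1 : ‖T v₁‖ = ‖v₁‖ := T.norm_map v₁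
      rw [hTv₁, norm_smul, hnorm1, mul_one] at h1
      exact h1
    have hμ0 : μ ≠ 0 := by
      intro h0; rw [h0] at hμ1; simp at hμ1
    -- orthogonal complement
    haveI hfact : Fact (finrank ℂ E = n + 1) := ⟨hn⟩
    set K := (ℂ ∙ v₁)ᗮ with hK
    have hdimK : finrank ℂ K = n := by
      rw [hK]
      exact Submodule.finrank_orthogonal_span_singleton hv₁0
    have hmaps : ∀ z ∈ K, T z ∈ K := by
      intro z hz
      rw [hK, Submodule.mem_orthogonal] at *
      intro u hu
      rw [Submodule.mem_span_singleton] at hu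
      obtain ⟨c, rfl⟩ := hu
      have : ⟪v₁, T z⟫ = 0 := by
        have h2 : ⟪T v₁, T z⟫ = ⟪v₁, z⟫ := T.inner_map_map v₁ z
        rw [hTv₁, inner_smul_left] at h2
        have h3 : ⟪v₁, z⟫ = 0 := hz v₁ (Submodule.mem_span_singleton_self v₁)
        rw [h3] at h2
        rcases mul_eq_zero.mp h2 with h2 | h2
        · exact absurd (by simpa using h2 : μ = 0) hμ0
        · exact h2
      rw [inner_smul_left, this, mul_zero]
    let T' : K →ₗᵢ[ℂ] K :=
      { toLinearMap := (T.toLinearEquiv.toLinearMap).restrict hmaps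
        norm_map' := fun z => by
          have h1 := T.norm_map (z : E)
          simpa [LinearMap.restrict_apply] using h1 }
    have hsurj : Function.Surjective T' := by
      apply LinearMap.surjective_of_injective (f := T'.toLinearMap)
      exact T'.injective
    let T'' := LinearIsometryEquiv.ofSurjective T' hsurj
    obtain ⟨w, ν, hworth, hν1, hweig⟩ := ih K inferInstance inferInstance inferInstance hdimK T''
    refine ⟨Fin.cons v₁ (fun l => (w l : E)), Fin.cons μ ν, ?_, ?_, ?_⟩
    · rw [orthonormal_iff_ite]
      intro i j
      have hwK : ∀ l, (w l : E) ∈ K := fun l => (w l).2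
      have hv₁w : ∀ l, ⟪v₁, (w l : E)⟫ = 0 := by
        intro l
        exact (Submodule.mem_orthogonal (Submodule.span ℂ {v₁}) _).mp (hwK l) v₁
          (Submodule.mem_span_singleton_self v₁)
      refine Fin.cases ?_ ?_ i
      · refine Fin.cases ?_ ?_ j
        · simp only [Fin.cons_zero, if_pos rfl]
          rw [@inner_self_eq_norm_sq_to_K ℂ, hnorm1]
          norm_num
        · intro l
          simp only [Fin.cons_zero, Fin.cons_succ]
          rw [if_neg (Ne.symm (Fin.succ_ne_zero l))]
          exact hv₁w l
      · intro l
        refine Fin.cases ?_ ?_ j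
        · simp only [Fin.cons_zero, Fin.cons_succ]
          rw [if_neg (Fin.succ_ne_zero l)]
          rw [← inner_conj_symm, hv₁w l, map_zero]
        · intro l'
          simp only [Fin.cons_succ]
          have := (orthonormal_iff_ite.mp hworth) l l'
          rw [Submodule.coe_inner] at this
          rw [this]
          simp [Fin.succ_inj]
    · refine Fin.cases ?_ ?_
      · simpa using hμ1
      · intro l; simpa using hν1 l
    · refine Fin.cases ?_ ?_
      · simpa using hTv₁
      · intro l
        simp only [Fin.cons_succ]
        have h1 := hweig l
        have h2 := congrArg (fun (z : K) => (z : E)) h1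
        exact h2


end Helpers

section MainProof
open Matrix Module

local notation "⟪" x ", " y "⟫" => @inner ℂ _ _ x y

/-- Decomposition of a PSD block Toeplitz matrix (Yang et al. / Gurvits–Barnum style):
there exist frequencies and vectors so that the matrix is a sum of outer products of
Kronecker products of 1D steering vectors with the vectors, and each block diagonal has
the stated form. -/
theorem psd_blockToeplitz_decomposition (q t r : ℕ)
    (S : Matrix (Fin q × Fin t) (Fin q × Fin t) ℂ)
    (hpsd : S.PosSemidef)
    (hbt : ∀ (a b a' b' : Fin q) (i j : Fin t),
      ((a.val : ℤ) - (b.val : ℤ) = (a'.val : ℤ) - (b'.val : ℤ)) →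
      S (a, i) (b, j) = S (a', i) (b', j))
    (hrank : S.rank = r) :
    ∃ (f : Fin r → ℝ) (g : Fin r → Fin t → ℂ),
      (∀ k, f k ∈ Set.Ico (0 : ℝ) 1) ∧
      (∀ (a b : Fin q) (i j : Fin t),
        S (a, i) (b, j) =
          ∑ k, (vand q (f k) a * g k i) * (starRingEnd ℂ) (vand q (f k) b * g k j)) ∧
      (∀ (d : ℤ) (a b : Fin q) (i j : Fin t), (a.val : ℤ) - (b.val : ℤ) = d →
        S (a, i) (b, j) =
          ∑ k, Complex.exp (2 * Real.pi * Complex.I * (d : ℂ) * (f k : ℂ)) *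
            g k i * (starRingEnd ℂ) (g k j)) := by
  rcases isEmpty_or_nonempty (Fin q × Fin t) with hemp | hne
  · exact ⟨fun _ => 0, fun _ _ => 0, fun k => ⟨le_refl 0, zero_lt_one⟩,
      fun a b i j => (hemp.false (a, i)).elim, fun d a b i j _ => (hemp.false (a, i)).elim⟩
  obtain ⟨G, hG⟩ := psd_factor S hpsd hrank
  have hq : 0 < q := (Classical.arbitrary (Fin q × Fin t)).1.pos
  set w : Fin q × Fin t → EuclideanSpace ℂ (Fin r) := fun p => WithLp.toLp 2 (fun k => G k p) with hwdef
  have hw : ∀ p p', ⟪w p, w p'⟫ = S p p' := by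
    intro p p'
    rw [hG p p']
    simp [PiLp.inner_apply, RCLike.inner_apply, hwdef, mul_comm]
  obtain ⟨T, hT⟩ := gram_eq_exists_isometry
    (fun c : Fin (q-1) × Fin t => w (⟨c.1.val, by have := c.1.2; omega⟩, c.2))
    (fun c : Fin (q-1) × Fin t => w (⟨c.1.val + 1, by have := c.1.2; omega⟩, c.2))
    (by
      intro c d
      rw [hw, hw]
      exact hbt _ _ _ _ c.2 d.2 (by push_cast; ring))
  obtain ⟨v, μ, horth, hμ1, heig⟩ := isometry_eigenbasis r (EuclideanSpace ℂ (Fin r))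
    inferInstance inferInstance inferInstance (by simp) T
  have hsp : ⊤ ≤ Submodule.span ℂ (Set.range v) := by
    rcases Nat.eq_zero_or_pos r with hr0 | hrpos
    · intro z _
      have hsub : Subsingleton (EuclideanSpace ℂ (Fin r)) :=
        (finrank_zero_iff (R := ℂ)).mp (by simp [hr0])
      rw [Subsingleton.elim z 0]
      exact Submodule.zero_mem _
    · haveI : Nonempty (Fin r) := ⟨⟨0, hrpos⟩⟩
      exact (horth.linearIndependent.span_eq_top_of_card_eq_finrank (by simp)).ge
  set b : OrthonormalBasis (Fin r) ℂ (EuclideanSpace ℂ (Fin r)) :=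
    OrthonormalBasis.mk horth hsp with hbdef
  have hbcoe : ∀ l, b l = v l := fun l => by rw [hbdef, OrthonormalBasis.coe_mk]
  set q0 : Fin q := ⟨0, hq⟩ with hq0
  set c : Fin r → Fin t → ℂ := fun l i => ⟪v l, w (q0, i)⟫ with hc
  have key : ∀ (m : ℕ) (hm : m < q) (i : Fin t),
      w (⟨m, hm⟩, i) = ∑ l, (μ l ^ m * c l i) • v l := by
    intro m
    induction m with
    | zero =>
      intro hm i
      simp only [pow_zero, one_mul]
      have h0 := b.sum_repr' (w (q0, i))
      simp only [OrthonormalBasis.coe_mk, hbdef] at h0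
      exact h0.symm
    | succ m ihm =>
      intro hm i
      have hmq : m < q := by omega
      have hstep : T (w (⟨m, hmq⟩, i)) = w (⟨m+1, hm⟩, i) :=
        hT (⟨⟨m, by omega⟩, i⟩)
      rw [← hstep, ihm hmq i, map_sum]
      refine Finset.sum_congr rfl fun l _ => ?_
      rw [LinearIsometryEquiv.map_smul, heig l, smul_smul, pow_succ]
      ring_nf
  have master : ∀ (a bb : Fin q) (i j : Fin t),
      S (a, i) (bb, j) = ∑ l, (starRingEnd ℂ) (μ l ^ (a : ℕ) * c l i)
        * (μ l ^ (bb : ℕ) * c l j) := by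
    intro a bb i j
    rw [← hw]
    have h1 := key a.val a.isLt i
    have h2 := key bb.val bb.isLt j
    simp only [Fin.eta] at h1 h2
    rw [h1, h2, horth.inner_sum]
  have hnorm : ∀ k, ‖(starRingEnd ℂ) (μ k)‖ = 1 := fun k => by
    rw [RCLike.norm_conj]; exact hμ1 k
  choose f hf hexp using fun k => circle_exists_freq ((starRingEnd ℂ) (μ k)) (hnorm k)
  have hμE : ∀ k, μ k = (starRingEnd ℂ) (Complex.exp (2 * Real.pi * Complex.I * (f k : ℂ))) := by
    intro k
    rw [hexp k, Complex.conj_conj]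
  have hE0 : ∀ k, Complex.exp (2 * Real.pi * Complex.I * (f k : ℂ)) ≠ 0 :=
    fun k => Complex.exp_ne_zero _
  have hEnorm : ∀ k, ‖Complex.exp (2 * Real.pi * Complex.I * (f k : ℂ))‖ = 1 := by
    intro k
    rw [hexp k]
    exact hnorm k
  have hconjE : ∀ k, (starRingEnd ℂ) (Complex.exp (2 * Real.pi * Complex.I * (f k : ℂ)))
      = (Complex.exp (2 * Real.pi * Complex.I * (f k : ℂ)))⁻¹ := by
    intro k
    refine eq_inv_of_mul_eq_one_left ?_
    rw [mul_comm, Complex.mul_conj']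
    rw [hEnorm k]
    norm_num
  refine ⟨f, fun k i => (starRingEnd ℂ) (c k i), hf, ?_, ?_⟩
  · intro a bb i j
    rw [master a bb i j]
    refine Finset.sum_congr rfl fun k _ => ?_
    have hvand : ∀ (m : Fin q), vand q (f k) m
        = Complex.exp (2 * Real.pi * Complex.I * (f k : ℂ)) ^ (m : ℕ) := by
      intro m
      rw [← Complex.exp_nat_mul]
      show Complex.exp (2 * Real.pi * Complex.I * (m.val : ℂ) * (f k : ℂ)) = _
      congr 1
      ring
    rw [hvand a, hvand bb]
    simp only [hμE k, _root_.map_mul, _root_.map_pow, Complex.conj_conj]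
    try ring
  · intro d a bb i j hd
    rw [master a bb i j]
    refine Finset.sum_congr rfl fun k _ => ?_
    have hzp : Complex.exp (2 * Real.pi * Complex.I * (d : ℂ) * (f k : ℂ))
        = Complex.exp (2 * Real.pi * Complex.I * (f k : ℂ)) ^ (d : ℤ) := by
      rw [← Complex.exp_int_mul]
      congr 1
      ring
    rw [hzp]
    have hzpow : ∀ (z : ℂ), z ≠ 0 → ∀ (aa b' : ℕ), z ^ ((aa:ℤ) - (b':ℤ)) = z ^ aa * (z⁻¹) ^ b' := by
      intro z hz aa b'
      rw [zpow_sub₀ hz, zpow_natCast, zpow_natCast, inv_pow, div_eq_mul_inv]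
    simp only [hμE k, hconjE k, _root_.map_mul, _root_.map_pow, map_inv₀,
      Complex.conj_conj, inv_inv]
    rw [← hd, hzpow _ (hE0 k)]
    try ring

end MainProof
end

section
/- Let q ≥ 2 and let S ∈ ℂ^{qt×qt} be positive semidefinite block Toeplitz with q×q blocks of size t×t and rank r. Write the Cholesky-type factorization S = CC* with C ∈ ℂ^{qt×r}, and partition C row-wise into q blocks C_0,...,C_{q−1} ∈ ℂ^{t×r}. Then there exists an r×r unitary matrix U such that [C_0; ...; C_{q−2}] U = [C_1; ...; C_{q−1}] (stacking blocks vertically), and the eigenvalues of U are of the form e^{2πi f_j} with f_j ∈ [0,1). -/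
open Matrix
open scoped ComplexOrder

lemma unimodular_exp_form {r : ℕ} (U : Matrix (Fin r) (Fin r) ℂ)
    (hU : U ∈ Matrix.unitaryGroup (Fin r) ℂ) :
    ∀ μ ∈ spectrum ℂ U, ∃ f : ℝ, f ∈ Set.Ico (0 : ℝ) 1 ∧
      μ = Complex.exp (2 * Real.pi * Complex.I * (f : ℂ)) := by
  intro μ hμ
  letI := Matrix.instL2OpNormedAddCommGroup (m := Fin r) (n := Fin r) (𝕜 := ℂ)
  letI := Matrix.instL2OpNormedRing (n := Fin r) (𝕜 := ℂ)
  letI := Matrix.instL2OpNormedAlgebra (n := Fin r) (𝕜 := ℂ)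
  letI := Matrix.instCStarRing (n := Fin r) (𝕜 := ℂ)
  haveI : CompleteSpace (Matrix (Fin r) (Fin r) ℂ) := FiniteDimensional.complete ℂ _
  have habs : ‖μ‖ = 1 := by
    have := spectrum.subset_circle_of_unitary hU hμ
    simpa using mem_sphere_zero_iff_norm.mp this
  have hμeq : μ = Complex.exp (μ.arg * Complex.I) := by
    conv_lhs => rw [← Complex.norm_mul_exp_arg_mul_I μ]
    rw [habs]; simp
  have hπ : (0 : ℝ) < Real.pi := Real.pi_pos
  have hπ' : (Real.pi : ℂ) ≠ 0 := by exact_mod_cast hπ.ne'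
  by_cases h0 : 0 ≤ μ.arg
  · refine ⟨μ.arg / (2 * Real.pi), ⟨by positivity, ?_⟩, ?_⟩
    · have := Complex.arg_le_pi μ
      rw [div_lt_one (by positivity)]; linarith
    · have key : 2 * (Real.pi : ℂ) * Complex.I * ((μ.arg / (2 * Real.pi) : ℝ) : ℂ)
          = (μ.arg : ℂ) * Complex.I := by
        push_cast; field_simp
      rw [key]; exact hμeq
  · refine ⟨μ.arg / (2 * Real.pi) + 1, ⟨?_, ?_⟩, ?_⟩
    · have h1 := Complex.neg_pi_lt_arg μ
      have : -(1:ℝ)/2 < μ.arg / (2 * Real.pi) := by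
        rw [div_lt_div_iff₀ (by norm_num) (by positivity)]; linarith
      linarith
    · have : μ.arg / (2 * Real.pi) < 0 :=
        div_neg_of_neg_of_pos (by linarith) (by positivity)
      linarith
    · have key : 2 * (Real.pi : ℂ) * Complex.I * ((μ.arg / (2 * Real.pi) + 1 : ℝ) : ℂ)
          = (μ.arg : ℂ) * Complex.I + 2 * Real.pi * Complex.I := by
        push_cast; field_simp
      rw [key, Complex.exp_add, Complex.exp_two_pi_mul_I, mul_one]; exact hμeq


/-- Shift structure of a factorization of a PSD block Toeplitz matrix: the block rows of
a rank factorization are related by a unitary matrix whose eigenvalues are unimodular,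
i.e. of the form `e^{2πi f}` with `f ∈ [0,1)`. -/
theorem blockToeplitz_factor_shift_unitary (q t r : ℕ) (hq : 2 ≤ q)
    (S : Matrix (Fin q × Fin t) (Fin q × Fin t) ℂ)
    (hpsd : S.PosSemidef)
    (hbt : ∀ (a b a' b' : Fin q) (i j : Fin t),
      ((a.val : ℤ) - (b.val : ℤ) = (a'.val : ℤ) - (b'.val : ℤ)) →
      S (a, i) (b, j) = S (a', i) (b', j))
    (hrank : S.rank = r)
    (C : Matrix (Fin q × Fin t) (Fin r) ℂ)
    (hfact : S = C * Cᴴ) :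
    ∃ U : Matrix (Fin r) (Fin r) ℂ,
      U ∈ Matrix.unitaryGroup (Fin r) ℂ ∧
      (∀ (a : Fin q) (ha : a.val + 1 < q) (i : Fin t) (k : Fin r),
        (∑ l, C (a, i) l * U l k) = C (⟨a.val + 1, ha⟩, i) k) ∧
      (∀ μ ∈ spectrum ℂ U, ∃ f : ℝ, f ∈ Set.Ico (0 : ℝ) 1 ∧
        μ = Complex.exp (2 * Real.pi * Complex.I * (f : ℂ))) := by
  classical
  set V := EuclideanSpace ℂ (Fin r) with hV
  set x : (Fin q × Fin t) → V :=
    fun u => (WithLp.equiv 2 (Fin r → ℂ)).symm (fun k => C u k) with hx_def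
  have hx_apply : ∀ u k, x u k = C u k := fun u k => rfl
  have inner_eq : ∀ u v, (inner ℂ (x u) (x v) : ℂ) = S v u := by
    intro u v
    rw [PiLp.inner_apply, hfact]
    simp only [RCLike.inner_apply, Matrix.mul_apply, Matrix.conjTranspose_apply, hx_apply]
    exact Finset.sum_congr rfl fun k _ => by rw [starRingEnd_apply]
  set e₀ : (Fin (q - 1) × Fin t) → (Fin q × Fin t) :=
    fun p => (⟨p.1.val, by omega⟩, p.2) with he₀
  set e₁ : (Fin (q - 1) × Fin t) → (Fin q × Fin t) :=
    fun p => (⟨p.1.val + 1, by omega⟩, p.2) with he₁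
  set Φ := Fintype.linearCombination ℂ (fun p => x (e₀ p)) with hΦ
  set Ψ := Fintype.linearCombination ℂ (fun p => x (e₁ p)) with hΨ
  have hx01 : ∀ p p' : Fin (q - 1) × Fin t,
      (inner ℂ (x (e₁ p)) (x (e₁ p')) : ℂ) = inner ℂ (x (e₀ p)) (x (e₀ p')) := by
    intro p p'
    rw [inner_eq, inner_eq]
    apply hbt
    simp only [he₀, he₁]
    push_cast
    ring
  have hinner : ∀ c : (Fin (q - 1) × Fin t) → ℂ,
      (inner ℂ (Ψ c) (Ψ c) : ℂ) = inner ℂ (Φ c) (Φ c) := by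
    intro c
    simp only [hΦ, hΨ, Fintype.linearCombination_apply]
    rw [_root_.sum_inner, _root_.sum_inner]
    simp only [_root_.inner_sum, inner_smul_left, inner_smul_right]
    refine Finset.sum_congr rfl fun p _ => ?_
    exact Finset.sum_congr rfl fun p' _ => by rw [hx01]
  have hnorm : ∀ c, ‖Ψ c‖ = ‖Φ c‖ := by
    intro c
    have h1 : ‖Ψ c‖ ^ 2 = ‖Φ c‖ ^ 2 := by
      rw [← inner_self_eq_norm_sq (𝕜 := ℂ), ← inner_self_eq_norm_sq (𝕜 := ℂ), hinner]
    have := congrArg Real.sqrt h1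
    rwa [Real.sqrt_sq (norm_nonneg _), Real.sqrt_sq (norm_nonneg _)] at this
  have hker : LinearMap.ker Φ ≤ LinearMap.ker Ψ := by
    intro c hc
    rw [LinearMap.mem_ker] at hc ⊢
    rw [← norm_eq_zero, hnorm, hc, norm_zero]
  set L₀ : LinearMap.range Φ →ₗ[ℂ] V :=
    (Submodule.liftQ (LinearMap.ker Φ) Ψ hker).comp
      (Φ.quotKerEquivRange.symm.toLinearMap) with hL₀def
  have hL₀ : ∀ c, L₀ ⟨Φ c, LinearMap.mem_range_self Φ c⟩ = Ψ c := by
    intro c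
    have h1 : (Φ.quotKerEquivRange.symm ⟨Φ c, LinearMap.mem_range_self Φ c⟩)
        = Submodule.Quotient.mk c := by
      rw [LinearEquiv.symm_apply_eq]
      exact Subtype.ext (Φ.quotKerEquivRange_apply_mk c).symm
    simp only [hL₀def, LinearMap.comp_apply, LinearEquiv.coe_coe, h1, Submodule.liftQ_apply]
  set L : LinearMap.range Φ →ₗᵢ[ℂ] V :=
    { toLinearMap := L₀
      norm_map' := by
        rintro ⟨v, hv⟩
        obtain ⟨c, rfl⟩ := hv
        rw [hL₀ c, hnorm]
        rfl } with hLdef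
  set T := L.extend with hT
  have hTapp : ∀ p : Fin (q - 1) × Fin t, T (x (e₀ p)) = x (e₁ p) := by
    intro p
    have h1 : Φ (Pi.single p 1) = x (e₀ p) := by
      rw [hΦ, Fintype.linearCombination_apply]
      simp [Pi.single_apply, ite_smul]
    have h2 : Ψ (Pi.single p 1) = x (e₁ p) := by
      rw [hΨ, Fintype.linearCombination_apply]
      simp [Pi.single_apply, ite_smul]
    have hmem : x (e₀ p) ∈ LinearMap.range Φ := h1 ▸ LinearMap.mem_range_self Φ _
    have := L.extend_apply ⟨x (e₀ p), hmem⟩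
    rw [← hT] at this
    have heq : (⟨x (e₀ p), hmem⟩ : LinearMap.range Φ)
        = ⟨Φ (Pi.single p 1), LinearMap.mem_range_self Φ _⟩ := Subtype.ext h1.symm
    calc T (x (e₀ p)) = L ⟨x (e₀ p), hmem⟩ := this
      _ = L₀ ⟨Φ (Pi.single p 1), LinearMap.mem_range_self Φ _⟩ := by rw [heq]; rfl
      _ = Ψ (Pi.single p 1) := hL₀ _
      _ = x (e₁ p) := h2
  -- the matrix of T (transposed)
  set xe : Fin r → V := fun l => EuclideanSpace.single l 1 with hxe
  set U : Matrix (Fin r) (Fin r) ℂ := fun l k => (T (xe l)) k with hU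
  have hcoord : ∀ (w : V) (k : Fin r), w k = (inner ℂ (xe k) w : ℂ) := by
    intro w k
    rw [hxe, EuclideanSpace.inner_single_left]
    simp
  have hrepr : ∀ v : V, ∑ l, v l • xe l = v := by
    intro v
    have := (EuclideanSpace.basisFun (Fin r) ℂ).sum_repr v
    simpa [EuclideanSpace.basisFun_apply, EuclideanSpace.basisFun_repr, hxe] using this
  have hTv : ∀ (v : V) (k : Fin r), (T v) k = ∑ l, v l * U l k := by
    intro v k
    rw [hcoord (T v) k]
    conv_lhs => rw [← hrepr v]
    rw [map_sum, inner_sum]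
    refine Finset.sum_congr rfl fun l _ => ?_
    rw [T.map_smul, inner_smul_right, ← hcoord (T (xe l)) k]
  have hUU : U ∈ Matrix.unitaryGroup (Fin r) ℂ := by
    rw [Matrix.mem_unitaryGroup_iff]
    ext a b
    rw [Matrix.mul_apply]
    have h4 : (inner ℂ (T (xe a)) (T (xe b)) : ℂ) = if a = b then 1 else 0 := by
      rw [LinearIsometry.inner_map_map]
      simp only [hxe]
      rw [EuclideanSpace.inner_single_left]
      simp [EuclideanSpace.single_apply]
    have h5 : ∑ l, U a l * (star U) l b = star (inner ℂ (T (xe a)) (T (xe b)) : ℂ) := by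
      rw [PiLp.inner_apply, star_sum]
      refine Finset.sum_congr rfl fun l _ => ?_
      rw [Matrix.star_apply]
      simp only [RCLike.inner_apply, starRingEnd_apply, star_mul', star_star]
      exact mul_comm _ _
    rw [h5, h4, Matrix.one_apply]
    simp [apply_ite]
  refine ⟨U, hUU, ?_, unimodular_exp_form U hUU⟩
  intro a ha i k
  set p : Fin (q - 1) × Fin t := (⟨a.val, by omega⟩, i) with hp
  have h0 : e₀ p = (a, i) := by
    simp only [he₀, hp]
  have h1 : e₁ p = (⟨a.val + 1, ha⟩, i) := rfl
  calc ∑ l, C (a, i) l * U l k = ∑ l, (x (a, i)) l * U l k := rfl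
    _ = (T (x (a, i))) k := (hTv _ k).symm
    _ = (x (e₁ p)) k := by rw [← h0, hTapp p]
    _ = C (⟨a.val + 1, ha⟩, i) k := by rw [h1]; exact hx_apply _ k
end
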